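/- arXiv:1506.06041 — 8 statements merged into one kernel-verified Lean document; each statement's English description precedes it below -/
import Mathlib

section
/- Let G be a Δ-regular finite simple graph of order n ≥ 1. Then A_{−Δ}(G) = n, and the minimum degree of the nonzero terms of the alliance polynomial A(G;x) equals n − Δ. -/
open Polynomial Finset

/-- Number of neighbors of `v` inside the set `S` (denoted δ_S(v)). -/
def SimpleGraph.degIn {V : Type*} [Fintype V] [DecidableEq V]
    (G : SimpleGraph V) [DecidableRel G.Adj] (S : Finset V) (v : V) : ℕ :=
  (S.filter (fun u => G.Adj v u)).card

/-- Number of neighbors of `v` outside the set `S` (denoted δ_{S̄}(v)). -/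
def SimpleGraph.degOut {V : Type*} [Fintype V] [DecidableEq V]
    (G : SimpleGraph V) [DecidableRel G.Adj] (S : Finset V) (v : V) : ℕ :=
  (Sᶜ.filter (fun u => G.Adj v u)).card

/-- `S` is an exact defensive `k`-alliance in `G`: the induced subgraph `⟨S⟩` is connected
(in particular `S` is nonempty) and `k = k_S = min_{v ∈ S} (δ_S(v) - δ_{S̄}(v))`. -/
def SimpleGraph.IsExactAlliance {V : Type*} [Fintype V] [DecidableEq V]
    (G : SimpleGraph V) [DecidableRel G.Adj] (S : Finset V) (k : ℤ) : Prop :=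
  (G.induce (S : Set V)).Connected ∧
    (∀ v ∈ S, k ≤ (G.degIn S v : ℤ) - (G.degOut S v : ℤ)) ∧
    (∃ v ∈ S, (G.degIn S v : ℤ) - (G.degOut S v : ℤ) = k)

/-- `A_k(G)`: the number of exact defensive `k`-alliances in `G`. -/
noncomputable def SimpleGraph.allianceCoeff {V : Type*} [Fintype V] [DecidableEq V]
    (G : SimpleGraph V) [DecidableRel G.Adj] (k : ℤ) : ℕ :=
  Set.ncard {S : Finset V | G.IsExactAlliance S k}

/-- The alliance polynomial `A(G;x) = Σ_{k=-Δ}^{Δ} A_k(G) x^{n+k}`, where `n` is the order and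
`Δ` the maximum degree of `G`, regarded as a real polynomial. -/
noncomputable def SimpleGraph.alliancePoly {V : Type*} [Fintype V] [DecidableEq V]
    (G : SimpleGraph V) [DecidableRel G.Adj] : Polynomial ℝ :=
  ∑ k ∈ Finset.Icc (-(G.maxDegree : ℤ)) (G.maxDegree : ℤ),
    (G.allianceCoeff k : ℝ) • X ^ (((Fintype.card V : ℤ) + k).toNat)

lemma aux_eq_of_no_adj {W : Type*} (Gr : SimpleGraph W) (a b : W)
    (h : Gr.Reachable a b) (hiso : ∀ c, ¬ Gr.Adj a c) : a = b := by
  obtain ⟨w⟩ := h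
  cases w with
  | nil => rfl
  | cons h' p => exact absurd h' (hiso _)

lemma degIn_add_degOut {V : Type*} [Fintype V] [DecidableEq V]
    (G : SimpleGraph V) [DecidableRel G.Adj] (S : Finset V) (v : V) :
    G.degIn S v + G.degOut S v = G.degree v := by
  classical
  have h1 : G.neighborFinset v = Finset.univ.filter (fun u => G.Adj v u) := by
    ext u; simp [SimpleGraph.mem_neighborFinset]
  rw [SimpleGraph.degree, h1, SimpleGraph.degIn, SimpleGraph.degOut,
    ← Finset.card_union_of_disjoint, ← Finset.filter_union, Finset.union_compl]
  exact Finset.disjoint_filter_filter (disjoint_compl_right)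

lemma exact_neg_iff_singleton {V : Type*} [Fintype V] [DecidableEq V]
    (G : SimpleGraph V) [DecidableRel G.Adj] {Δ : ℕ}
    (hreg : G.IsRegularOfDegree Δ) (S : Finset V) :
    G.IsExactAlliance S (-(Δ : ℤ)) ↔ ∃ v, S = {v} := by
  constructor
  · rintro ⟨hconn, _, v, hv, hkv⟩
    have hsum := degIn_add_degOut G S v
    rw [hreg v] at hsum
    have hin : G.degIn S v = 0 := by omega
    have hiso : ∀ u ∈ S, ¬ G.Adj v u := by
      intro u hu hadj
      have : u ∈ S.filter (fun u => G.Adj v u) := by simp [hu, hadj]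
      rw [SimpleGraph.degIn, Finset.card_eq_zero] at hin
      simp [hin] at this
    refine ⟨v, Finset.eq_singleton_iff_unique_mem.mpr ⟨hv, fun u hu => ?_⟩⟩
    have hr := hconn.preconnected ⟨v, by simpa using hv⟩ ⟨u, by simpa using hu⟩
    have := aux_eq_of_no_adj _ _ _ hr (by
      rintro ⟨c, hc⟩ hadj
      rw [SimpleGraph.comap_adj] at hadj
      exact hiso c (by simpa using hc) hadj)
    exact (Subtype.ext_iff.mp this).symm
  · rintro ⟨v, rfl⟩
    have hin : G.degIn {v} v = 0 := by
      simp [SimpleGraph.degIn, Finset.filter_singleton]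
    have hout : G.degOut {v} v = Δ := by
      have := degIn_add_degOut G {v} v
      rw [hreg v, hin] at this; omega
    refine ⟨?_, ?_, v, Finset.mem_singleton_self v, by rw [hin, hout]; push_cast; ring⟩
    · haveI : Nonempty (↑((({v} : Finset V) : Set V))) := ⟨⟨v, by simp⟩⟩
      refine ⟨fun a b => ?_⟩
      have : a = b := by
        obtain ⟨a, ha⟩ := a; obtain ⟨b, hb⟩ := b
        simp only [Finset.coe_singleton, Set.mem_singleton_iff] at ha hb
        subst ha; subst hb; rfl
      rw [this]
    · intro u hu
      rw [Finset.mem_singleton] at hu; subst hu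
      rw [hin, hout]; push_cast; ring_nf; omega

/-- For a Δ-regular graph of order `n ≥ 1`, `A_{-Δ}(G) = n` and the minimum
degree of the nonzero terms of `A(G;x)` is `n - Δ`. -/
theorem allianceCoeff_neg_maxDeg_and_natTrailingDegree
    {V : Type*} [Fintype V] [DecidableEq V] [Nonempty V]
    (G : SimpleGraph V) [DecidableRel G.Adj] (Δ : ℕ)
    (hreg : G.IsRegularOfDegree Δ) :
    G.allianceCoeff (-(Δ : ℤ)) = Fintype.card V ∧
    G.alliancePoly.natTrailingDegree = Fintype.card V - Δ := by
  classical
  set n := Fintype.card V with hn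
  have hΔn : Δ < n := by
    have := G.degree_lt_card_verts (Classical.arbitrary V)
    rwa [hreg] at this
  have hmax : G.maxDegree = Δ := by
    refine le_antisymm (G.maxDegree_le_of_forall_degree_le _ fun v => (hreg v).le) ?_
    have := G.degree_le_maxDegree (Classical.arbitrary V)
    rwa [hreg] at this
  have hcount : G.allianceCoeff (-(Δ : ℤ)) = n := by
    have hset : {S : Finset V | G.IsExactAlliance S (-(Δ : ℤ))}
        = ↑(Finset.univ.image (fun v : V => ({v} : Finset V))) := by
      ext S
      simp only [Set.mem_setOf_eq, Finset.coe_image, Set.mem_image, Finset.mem_coe,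
        Finset.coe_univ, Set.image_univ, Set.mem_range]
      rw [exact_neg_iff_singleton G hreg]
      exact ⟨fun ⟨v, h⟩ => ⟨v, h.symm⟩, fun ⟨v, h⟩ => ⟨v, h.symm⟩⟩
    rw [SimpleGraph.allianceCoeff, hset, Set.ncard_coe_finset,
      Finset.card_image_of_injective _ (fun a b h => by simpa using h), Finset.card_univ]
  refine ⟨hcount, ?_⟩
  have hcoeff : ∀ m, G.alliancePoly.coeff m
      = ∑ k ∈ Finset.Icc (-(Δ : ℤ)) (Δ : ℤ),
          (G.allianceCoeff k : ℝ) * (if ((n : ℤ) + k).toNat = m then 1 else 0) := by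
    intro m
    rw [SimpleGraph.alliancePoly, hmax, Polynomial.finset_sum_coeff]
    refine Finset.sum_congr rfl fun k hk => ?_
    rw [Polynomial.coeff_smul, Polynomial.coeff_X_pow]
    simp only [smul_eq_mul, ← hn, eq_comm]
  have hc : G.alliancePoly.coeff (n - Δ) = (n : ℝ) := by
    rw [hcoeff]
    rw [Finset.sum_eq_single (-(Δ : ℤ))]
    · rw [if_pos (by omega), hcount]; ring
    · intro k hk hne
      simp only [Finset.mem_Icc] at hk
      rw [if_neg (by omega)]; ring
    · intro h
      simp only [Finset.mem_Icc] at h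
      omega
  have hcne : G.alliancePoly.coeff (n - Δ) ≠ 0 := by
    rw [hc]; positivity
  refine le_antisymm (Polynomial.natTrailingDegree_le_of_ne_zero hcne) ?_
  refine Polynomial.le_natTrailingDegree (fun h => hcne (by simp [h])) fun m hm => ?_
  rw [hcoeff]
  refine Finset.sum_eq_zero fun k hk => ?_
  simp only [Finset.mem_Icc] at hk
  rw [if_neg (by omega)]; ring
end

section
/- Let G be a Δ-regular finite simple graph of order n ≥ 1 and size m. Then the degree of the alliance polynomial A(G;x) equals n + Δ; moreover n = (Deg_min(A(G;x)) + Deg(A(G;x)))/2 and m = (Deg(A(G;x))² − Deg_min(A(G;x))²)/8, where also m = A_{−Δ}(G)·(Deg(A(G;x)) − Deg_min(A(G;x)))/4. -/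
open Polynomial Finset

section Aux

variable {V : Type*} [Fintype V] [DecidableEq V] (G : SimpleGraph V) [DecidableRel G.Adj]

lemma aux_degIn_add_degOut (S : Finset V) (v : V) :
    G.degIn S v + G.degOut S v = G.degree v := by
  classical
  rw [SimpleGraph.degIn, SimpleGraph.degOut, ← Finset.card_union_of_disjoint, ← Finset.filter_union,
    Finset.union_compl]
  · rw [SimpleGraph.degree, SimpleGraph.neighborFinset_eq_filter]
  · exact Finset.disjoint_filter_filter (disjoint_compl_right)

lemma aux_induce_singleton_connected (v : V) :
    (G.induce (({v} : Finset V) : Set V)).Connected := by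
  rw [SimpleGraph.connected_iff]
  refine ⟨fun a b => ?_, ⟨⟨v, by simp⟩⟩⟩
  have : a = b := by
    ext
    have ha := a.2; have hb := b.2
    simp only [Finset.coe_singleton, Set.mem_singleton_iff] at ha hb
    rw [ha, hb]
  rw [this]

lemma aux_degIn_singleton (v : V) : G.degIn {v} v = 0 := by
  simp [SimpleGraph.degIn, Finset.filter_singleton, G.irrefl]

lemma aux_singleton_alliance {Δ : ℕ} (hreg : G.IsRegularOfDegree Δ) (v : V) :
    G.IsExactAlliance ({v} : Finset V) (-(Δ : ℤ)) := by
  have h0 : G.degIn {v} v = 0 := aux_degIn_singleton G v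
  have h1 : G.degOut {v} v = Δ := by
    have := aux_degIn_add_degOut G {v} v
    rw [h0, hreg v] at this; omega
  refine ⟨aux_induce_singleton_connected G v, ?_, ⟨v, by simp, by rw [h0, h1]; push_cast; ring⟩⟩
  intro u hu
  simp only [Finset.mem_singleton] at hu
  subst hu
  rw [h0, h1]; omega

lemma aux_exists_adj_of_mem_connected {S : Finset V} (hc : (G.induce (S : Set V)).Connected)
    {v u : V} (hv : v ∈ S) (hu : u ∈ S) (hne : v ≠ u) :
    ∃ w ∈ S, G.Adj v w := by
  obtain ⟨p⟩ := hc.preconnected ⟨v, hv⟩ ⟨u, hu⟩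
  cases p with
  | nil => exact absurd rfl hne
  | @cons _ x _ h q => exact ⟨x.1, by exact_mod_cast x.2, h⟩

lemma aux_alliance_neg_iff {Δ : ℕ} (hreg : G.IsRegularOfDegree Δ) (S : Finset V) :
    G.IsExactAlliance S (-(Δ : ℤ)) ↔ ∃ v, S = {v} := by
  constructor
  · rintro ⟨hc, _, ⟨v, hv, heq⟩⟩
    have hsum := aux_degIn_add_degOut G S v
    rw [hreg v] at hsum
    have h0 : G.degIn S v = 0 := by omega
    refine ⟨v, ?_⟩
    apply Finset.eq_singleton_iff_unique_mem.mpr ⟨hv, ?_⟩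
    intro u hu
    by_contra hne
    obtain ⟨w, hw, hadj⟩ := aux_exists_adj_of_mem_connected G hc hv hu (Ne.symm hne)
    have : w ∈ S.filter (fun u => G.Adj v u) := Finset.mem_filter.mpr ⟨hw, hadj⟩
    rw [SimpleGraph.degIn, Finset.card_eq_zero] at h0
    · exact absurd (h0 ▸ this) (Finset.notMem_empty w)
  · rintro ⟨v, rfl⟩
    exact aux_singleton_alliance G hreg v

lemma aux_ncard_neg {Δ : ℕ} (hreg : G.IsRegularOfDegree Δ) :
    G.allianceCoeff (-(Δ : ℤ)) = Fintype.card V := by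
  have : {S : Finset V | G.IsExactAlliance S (-(Δ : ℤ))}
      = (fun v => ({v} : Finset V)) '' Set.univ := by
    ext S
    simp only [Set.mem_setOf_eq, Set.image_univ, Set.mem_range]
    rw [aux_alliance_neg_iff G hreg]
    exact ⟨fun ⟨v, h⟩ => ⟨v, h.symm⟩, fun ⟨v, h⟩ => ⟨v, h.symm⟩⟩
  rw [SimpleGraph.allianceCoeff, this,
    Set.ncard_image_of_injective _ (fun a b h => Finset.singleton_injective h),
    Set.ncard_univ, Nat.card_eq_fintype_card]

lemma aux_component_alliance {Δ : ℕ} (hreg : G.IsRegularOfDegree Δ) (v₀ : V) :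
    G.IsExactAlliance (Set.toFinset {u | G.Reachable v₀ u}) (Δ : ℤ) := by
  classical
  set S : Finset V := Set.toFinset {u | G.Reachable v₀ u} with hS
  have hmem : ∀ u, u ∈ S ↔ G.Reachable v₀ u := by
    intro u; rw [hS, Set.mem_toFinset]; rfl
  have hv₀ : v₀ ∈ S := (hmem v₀).mpr (SimpleGraph.Reachable.refl v₀)
  have hout : ∀ u ∈ S, G.degOut S u = 0 := by
    intro u hu
    rw [SimpleGraph.degOut, Finset.card_eq_zero, Finset.filter_eq_empty_iff]
    intro w hw
    rw [Finset.mem_compl, hmem] at hw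
    intro hadj
    exact hw (((hmem u).mp hu).trans hadj.reachable)
  have hin : ∀ u ∈ S, G.degIn S u = Δ := by
    intro u hu
    have := aux_degIn_add_degOut G S u
    rw [hreg u, hout u hu] at this; omega
  have hval : ∀ u ∈ S, (G.degIn S u : ℤ) - (G.degOut S u : ℤ) = (Δ : ℤ) := by
    intro u hu; rw [hin u hu, hout u hu]; simp
  refine ⟨?_, fun u hu => (hval u hu).ge, ⟨v₀, hv₀, hval v₀ hv₀⟩⟩
  apply G.induce_connected_of_patches v₀ (by exact_mod_cast hv₀)
  intro w hw
  have hrw : G.Reachable v₀ w := by rwa [← hmem, ← Finset.mem_coe]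
  obtain ⟨p⟩ := hrw
  refine ⟨{x | x ∈ p.support}, ?_, p.start_mem_support, p.end_mem_support, ?_⟩
  · intro x hx
    rw [Finset.mem_coe, hmem]
    exact ⟨p.takeUntil x hx⟩
  · exact (p.connected_induce_support).preconnected _ _

lemma aux_coeff (hΔ : (G.maxDegree : ℤ) ≤ Fintype.card V) (k : ℤ)
    (hk : k ∈ Finset.Icc (-(G.maxDegree : ℤ)) (G.maxDegree : ℤ)) :
    G.alliancePoly.coeff (((Fintype.card V : ℤ) + k).toNat) = G.allianceCoeff k := by
  rw [Finset.mem_Icc] at hk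
  rw [SimpleGraph.alliancePoly, finset_sum_coeff]
  rw [Finset.sum_eq_single k]
  · rw [coeff_smul, coeff_X_pow, if_pos rfl, smul_eq_mul, mul_one]
  · intro j hj hne
    rw [Finset.mem_Icc] at hj
    rw [coeff_smul, coeff_X_pow, if_neg (by omega), smul_eq_mul, mul_zero]
  · intro h
    exact absurd (Finset.mem_Icc.mpr hk) h

end Aux

/-- For a Δ-regular graph of order `n ≥ 1` and size `m`, `Deg(A(G;x)) = n + Δ`,
`n = (Deg_min + Deg)/2`, `m = (Deg² - Deg_min²)/8` and `m = A_{-Δ}(G)·(Deg - Deg_min)/4`. -/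
theorem alliancePoly_degree_order_size
    {V : Type*} [Fintype V] [DecidableEq V] [Nonempty V]
    (G : SimpleGraph V) [DecidableRel G.Adj] (Δ : ℕ)
    (hreg : G.IsRegularOfDegree Δ) :
    G.alliancePoly.natDegree = Fintype.card V + Δ ∧
    (Fintype.card V : ℚ) =
      ((G.alliancePoly.natTrailingDegree : ℚ) + (G.alliancePoly.natDegree : ℚ)) / 2 ∧
    (G.edgeFinset.card : ℚ) =
      ((G.alliancePoly.natDegree : ℚ) ^ 2 - (G.alliancePoly.natTrailingDegree : ℚ) ^ 2) / 8 ∧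
    (G.edgeFinset.card : ℚ) =
      (G.allianceCoeff (-(Δ : ℤ)) : ℚ) *
        ((G.alliancePoly.natDegree : ℚ) - (G.alliancePoly.natTrailingDegree : ℚ)) / 4 := by
  classical
  set n := Fintype.card V with hn
  obtain ⟨v₀⟩ := ‹Nonempty V›
  -- max degree is Δ
  have hmax : G.maxDegree = Δ := by
    apply le_antisymm
    · exact G.maxDegree_le_of_forall_degree_le Δ (fun v => (hreg v).le)
    · rw [← hreg v₀]; exact G.degree_le_maxDegree v₀
  have hΔn : Δ < n := by rw [← hreg v₀]; exact G.degree_lt_card_verts v₀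
  have hcoeffneg : G.allianceCoeff (-(Δ : ℤ)) = n := aux_ncard_neg G hreg
  have hΔle : (G.maxDegree : ℤ) ≤ (n : ℤ) := by rw [hmax]; exact_mod_cast hΔn.le
  -- coefficient at n + Δ is A_Δ ≠ 0
  have hkmem : (Δ : ℤ) ∈ Finset.Icc (-(G.maxDegree : ℤ)) (G.maxDegree : ℤ) := by
    rw [hmax, Finset.mem_Icc]; omega
  have hkmem' : (-(Δ : ℤ)) ∈ Finset.Icc (-(G.maxDegree : ℤ)) (G.maxDegree : ℤ) := by
    rw [hmax, Finset.mem_Icc]; omega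
  have htop : G.alliancePoly.coeff (n + Δ) ≠ 0 := by
    have := aux_coeff G hΔle (Δ : ℤ) hkmem
    rw [show (((n : ℤ) + (Δ : ℤ)).toNat) = n + Δ by omega] at this
    rw [this]
    have hne : G.allianceCoeff (Δ : ℤ) ≠ 0 := by
      rw [SimpleGraph.allianceCoeff, ← Nat.pos_iff_ne_zero,
        Set.ncard_pos (Set.toFinite _)]
      exact ⟨Set.toFinset {u | G.Reachable v₀ u}, aux_component_alliance G hreg v₀⟩
    exact_mod_cast hne
  have hbot : G.alliancePoly.coeff (n - Δ) ≠ 0 := by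
    have := aux_coeff G hΔle (-(Δ : ℤ)) hkmem'
    rw [show (((n : ℤ) + -(Δ : ℤ)).toNat) = n - Δ by omega] at this
    rw [this, hcoeffneg]
    have : (0 : ℝ) < n := by exact_mod_cast Fintype.card_pos
    exact_mod_cast this.ne'
  -- degree bounds
  have hdeg : G.alliancePoly.natDegree = n + Δ := by
    apply le_antisymm
    · apply Polynomial.natDegree_sum_le_of_forall_le
      intro k hk
      rw [Finset.mem_Icc, hmax] at hk
      refine le_trans (Polynomial.natDegree_smul_le _ _) ?_
      rw [Polynomial.natDegree_X_pow]
      omega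
    · exact Polynomial.le_natDegree_of_ne_zero htop
  have hP0 : G.alliancePoly ≠ 0 := fun h => htop (by rw [h]; simp)
  have htr : G.alliancePoly.natTrailingDegree = n - Δ := by
    apply le_antisymm
    · exact Polynomial.natTrailingDegree_le_of_ne_zero hbot
    · apply Polynomial.le_natTrailingDegree hP0
      intro d hd
      rw [SimpleGraph.alliancePoly, finset_sum_coeff]
      apply Finset.sum_eq_zero
      intro k hk
      rw [Finset.mem_Icc, hmax] at hk
      rw [coeff_smul, coeff_X_pow, if_neg (by omega), smul_eq_mul, mul_zero]
  -- handshake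
  have hhs : 2 * G.edgeFinset.card = n * Δ := by
    rw [← G.sum_degrees_eq_twice_card_edges]
    rw [Finset.sum_congr rfl (fun v _ => hreg v), Finset.sum_const, smul_eq_mul,
      Finset.card_univ]
  have hcast : ((n - Δ : ℕ) : ℚ) = (n : ℚ) - (Δ : ℚ) := by
    rw [Nat.cast_sub hΔn.le]
  have hm : (G.edgeFinset.card : ℚ) * 2 = (n : ℚ) * (Δ : ℚ) := by
    have h := congrArg (fun x : ℕ => (x : ℚ)) hhs
    push_cast at h
    linarith
  refine ⟨hdeg, ?_, ?_, ?_⟩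
  · rw [hdeg, htr, hcast]; push_cast; ring
  · rw [hdeg, htr, hcast]; push_cast; nlinarith [hm]
  · rw [hdeg, htr, hcast, hcoeffneg]; push_cast; nlinarith [hm]
end

section
/- Let G be a cubic graph (3-regular finite simple graph) of order n and size m. Then A(G;x) = A_{−3}(G) x^{n−3} + A_{−1}(G) x^{n−1} + A_1(G) x^{n+1} + A_3(G) x^{n+3} (all other coefficients vanish), with A_{−3}(G) = n < m ≤ A_{−1}(G) and A_1(G) ≥ A_3(G). -/
open Polynomial Finset

namespace AllianceAux

set_option linter.unusedSectionVars false

variable {V : Type*} [Fintype V] [DecidableEq V] (G : SimpleGraph V) [DecidableRel G.Adj]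

lemma degIn_add_degOut (S : Finset V) (v : V) :
    G.degIn S v + G.degOut S v = G.degree v := by
  rw [SimpleGraph.degIn, SimpleGraph.degOut, ← Finset.card_union_of_disjoint
    (Finset.disjoint_filter_filter disjoint_compl_right), ← Finset.filter_union,
    Finset.union_compl]
  simp [SimpleGraph.degree, SimpleGraph.neighborFinset_eq_filter]

def Conn (S : Finset V) : Prop :=
  S.Nonempty ∧ ∀ a ∈ S, ∀ b ∈ S, ∃ w : G.Walk a b, ∀ x ∈ w.support, x ∈ S

lemma exists_gwalk {S : Finset V} :
    ∀ {a b : (S : Set V)} (w : (G.induce (S : Set V)).Walk a b),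
      ∃ p : G.Walk a b, ∀ x ∈ p.support, ∃ u ∈ w.support, (u : V) = x := by
  intro a b w
  induction w with
  | nil => exact ⟨SimpleGraph.Walk.nil, by simp⟩
  | @cons a c b h p ih =>
    obtain ⟨q, hq⟩ := ih
    refine ⟨SimpleGraph.Walk.cons (by simpa using h) q, ?_⟩
    intro x hx
    rw [SimpleGraph.Walk.support_cons] at hx
    rcases List.mem_cons.mp hx with rfl | hx
    · exact ⟨a, by simp, rfl⟩
    · obtain ⟨u, hu, rfl⟩ := hq x hx
      exact ⟨u, by simp [hu], rfl⟩

lemma reachable_induce {S : Finset V} :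
    ∀ {a b : V} (w : G.Walk a b), (∀ x ∈ w.support, x ∈ S) →
      ∀ (ha : a ∈ (S : Set V)) (hb : b ∈ (S : Set V)),
      (G.induce (S : Set V)).Reachable ⟨a, ha⟩ ⟨b, hb⟩ := by
  intro a b w
  induction w with
  | nil => intro _ ha hb; rfl
  | @cons a c b h p ih =>
    intro hw ha hb
    have hc' : c ∈ S := by
      apply hw c
      rw [SimpleGraph.Walk.support_cons]
      exact List.mem_cons_of_mem _ p.start_mem_support
    have hc : c ∈ (S : Set V) := by exact_mod_cast hc'
    have hw' : ∀ x ∈ p.support, x ∈ S := by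
      intro x hx
      apply hw x
      rw [SimpleGraph.Walk.support_cons]
      exact List.mem_cons_of_mem _ hx
    refine SimpleGraph.Reachable.trans ?_ (ih hw' hc hb)
    exact SimpleGraph.Adj.reachable (by simpa using h)

lemma conn_iff (S : Finset V) : (G.induce (S : Set V)).Connected ↔ Conn G S := by
  constructor
  · intro h
    obtain ⟨x⟩ := h.nonempty
    have hpre := h.preconnected
    refine ⟨⟨x, by exact_mod_cast x.2⟩, ?_⟩
    intro a ha b hb
    obtain ⟨w⟩ := hpre ⟨a, by exact_mod_cast ha⟩ ⟨b, by exact_mod_cast hb⟩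
    obtain ⟨p, hp⟩ := exists_gwalk G w
    refine ⟨p, fun x hx => ?_⟩
    obtain ⟨u, _, rfl⟩ := hp x hx
    exact_mod_cast u.2
  · rintro ⟨⟨a, ha⟩, h⟩
    haveI : Nonempty (S : Set V) := ⟨⟨a, by exact_mod_cast ha⟩⟩
    refine ⟨?_⟩
    rintro ⟨x, hx⟩ ⟨y, hy⟩
    obtain ⟨w, hw⟩ := h x (by exact_mod_cast hx) y (by exact_mod_cast hy)
    exact reachable_induce G w hw _ _

lemma exists_noncut (S : Finset V) (hc : Conn G S) (h2 : 2 ≤ S.card) :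
    ∃ v ∈ S, Conn G (S.erase v) := by
  have hconn : (G.induce (S : Set V)).Connected := (conn_iff G S).mpr hc
  obtain ⟨a, ha, b, hb, hab⟩ := Finset.one_lt_card.mp h2
  let r : (S : Set V) := ⟨a, by exact_mod_cast ha⟩
  obtain ⟨v, -, hv⟩ := Finset.exists_max_image (Finset.univ : Finset (S : Set V))
    ((G.induce (S : Set V)).dist r) ⟨r, Finset.mem_univ r⟩
  have hvr : v ≠ r := by
    intro h
    have h1 : 0 < (G.induce (S : Set V)).dist r ⟨b, by exact_mod_cast hb⟩ :=
      hconn.pos_dist_of_ne (by simp [r, Subtype.ext_iff]; exact hab)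
    have h2 := hv ⟨b, by exact_mod_cast hb⟩ (Finset.mem_univ _)
    rw [h, SimpleGraph.dist_self] at h2
    omega
  have key : ∀ u : (S : Set V), u ≠ v → ∃ p : (G.induce (S : Set V)).Walk r u, v ∉ p.support := by
    intro u huv
    obtain ⟨p, hp⟩ := hconn.exists_walk_length_eq_dist r u
    refine ⟨p, fun hmem => ?_⟩
    have h1 : (G.induce (S : Set V)).dist r v ≤ (p.takeUntil v hmem).length :=
      SimpleGraph.dist_le _
    have h2 : 1 ≤ (p.dropUntil v hmem).length := by
      rcases Nat.eq_zero_or_pos (p.dropUntil v hmem).length with h0 | h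
      · exact absurd (SimpleGraph.Walk.eq_of_length_eq_zero h0) (fun h' => huv h'.symm)
      · exact h
    have h3 : (p.takeUntil v hmem).length + (p.dropUntil v hmem).length = p.length := by
      rw [← SimpleGraph.Walk.length_append, SimpleGraph.Walk.take_spec]
    have h4 := hv u (Finset.mem_univ u)
    rw [hp] at h3
    omega
  refine ⟨v, by exact_mod_cast v.2, ?_⟩
  constructor
  · refine ⟨a, Finset.mem_erase.mpr ⟨?_, ha⟩⟩
    intro h
    exact hvr (Subtype.ext h.symm)
  · intro x hx y hy
    have hx' : x ∈ S := Finset.mem_of_mem_erase hx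
    have hy' : y ∈ S := Finset.mem_of_mem_erase hy
    have hxv : x ≠ (v : V) := (Finset.mem_erase.mp hx).1
    have hyv : y ≠ (v : V) := (Finset.mem_erase.mp hy).1
    obtain ⟨px, hpx⟩ := key ⟨x, by exact_mod_cast hx'⟩ (fun h => hxv (congrArg Subtype.val h))
    obtain ⟨py, hpy⟩ := key ⟨y, by exact_mod_cast hy'⟩ (fun h => hyv (congrArg Subtype.val h))
    obtain ⟨p, hp⟩ := exists_gwalk G (px.reverse.append py)
    refine ⟨p, ?_⟩
    intro z hz
    obtain ⟨u, hu, rfl⟩ := hp z hz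
    have huv : u ≠ v := by
      intro h
      subst h
      rw [SimpleGraph.Walk.mem_support_append_iff, SimpleGraph.Walk.support_reverse] at hu
      rcases hu with h | h
      · exact hpx (List.mem_reverse.mp h)
      · exact hpy h
    refine Finset.mem_erase.mpr ⟨fun h => huv (Subtype.ext h), by exact_mod_cast u.2⟩

lemma sum_three (hreg : G.IsRegularOfDegree 3) (S : Finset V) (v : V) :
    G.degIn S v + G.degOut S v = 3 := by
  rw [degIn_add_degOut]; exact hreg v

lemma closed_of_degIn (hreg : G.IsRegularOfDegree 3) {S : Finset V} {v : V}
    (h : G.degIn S v = 3) {u : V} (hadj : G.Adj v u) : u ∈ S := by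
  have hsub : S.filter (fun u => G.Adj v u) ⊆ Finset.univ.filter (fun u => G.Adj v u) :=
    Finset.filter_subset_filter _ (Finset.subset_univ S)
  have hc3 : (Finset.univ.filter (fun u => G.Adj v u)).card = 3 := by
    have h1 : G.neighborFinset v = Finset.univ.filter (fun u => G.Adj v u) := by
      rw [SimpleGraph.neighborFinset_eq_filter]
    rw [← h1]
    exact hreg v
  have heq := Finset.eq_of_subset_of_card_le hsub (by rw [hc3]; rw [SimpleGraph.degIn] at h; omega)
  have : u ∈ S.filter (fun u => G.Adj v u) := by
    rw [heq]; exact Finset.mem_filter.mpr ⟨Finset.mem_univ u, hadj⟩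
  exact (Finset.mem_filter.mp this).1

lemma mem_of_walk {T : Finset V} (hcl : ∀ x ∈ T, ∀ y, G.Adj x y → y ∈ T) :
    ∀ {a b : V}, G.Walk a b → a ∈ T → b ∈ T := by
  intro a b w
  induction w with
  | nil => exact id
  | cons h p ih => intro ha; exact ih (hcl _ ha _ h)

lemma degIn_of_alliance3 (hreg : G.IsRegularOfDegree 3) {S : Finset V}
    (hS : G.IsExactAlliance S 3) : ∀ v ∈ S, G.degIn S v = 3 := by
  intro v hv
  have h1 := hS.2.1 v hv
  have h2 := sum_three G hreg S v
  omega

lemma erase_alliance (hreg : G.IsRegularOfDegree 3) {S : Finset V}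
    (hS : G.IsExactAlliance S 3) :
    ∃ v ∈ S, G.IsExactAlliance (S.erase v) 1 := by
  have hin := degIn_of_alliance3 G hreg hS
  have hCn := (conn_iff G S).mp hS.1
  have hnbr : ∀ v ∈ S, ∃ u ∈ S, G.Adj v u := by
    intro v hv
    have h3 := hin v hv
    have : (S.filter (fun u => G.Adj v u)).Nonempty := by
      rw [← Finset.card_pos]
      rw [SimpleGraph.degIn] at h3
      omega
    obtain ⟨u, hu⟩ := this
    rw [Finset.mem_filter] at hu
    exact ⟨u, hu.1, hu.2⟩
  have h2 : 2 ≤ S.card := by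
    obtain ⟨v, hv, -⟩ := hS.2.2
    obtain ⟨u, hu, hadj⟩ := hnbr v hv
    exact Finset.one_lt_card.mpr ⟨v, hv, u, hu, hadj.ne⟩
  obtain ⟨v, hvS, hCe⟩ := exists_noncut G S hCn h2
  have hlow : ∀ u ∈ S.erase v, 2 ≤ G.degIn (S.erase v) u := by
    intro u hu
    have h3 := hin u (Finset.mem_of_mem_erase hu)
    rw [SimpleGraph.degIn] at h3 ⊢
    rw [Finset.filter_erase]
    have := Finset.pred_card_le_card_erase
      (s := S.filter (fun w => G.Adj u w)) (a := v)
    omega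
  refine ⟨v, hvS, (conn_iff G _).mpr hCe, ?_, ?_⟩
  · intro u hu
    have h4 := hlow u hu
    have h5 := sum_three G hreg (S.erase v) u
    omega
  · obtain ⟨u, huS, hadj⟩ := hnbr v hvS
    have huv : u ≠ v := hadj.ne'
    have hue : u ∈ S.erase v := Finset.mem_erase.mpr ⟨huv, huS⟩
    have h6 : G.degIn (S.erase v) u = 2 := by
      have h3 := hin u huS
      rw [SimpleGraph.degIn] at h3 ⊢
      rw [Finset.filter_erase, Finset.card_erase_of_mem
        (Finset.mem_filter.mpr ⟨hvS, hadj.symm⟩), h3]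
    have h5 := sum_three G hreg (S.erase v) u
    refine ⟨u, hue, ?_⟩
    rw [h6]
    have : G.degOut (S.erase v) u = 1 := by omega
    rw [this]
    norm_num

lemma alliance3_closed (hreg : G.IsRegularOfDegree 3) {S : Finset V}
    (hS : G.IsExactAlliance S 3) : ∀ x ∈ S, ∀ y, G.Adj x y → y ∈ S :=
  fun x hx y hy => closed_of_degIn G hreg (degIn_of_alliance3 G hreg hS x hx) hy

open Classical in
noncomputable def pick (S : Finset V) : Finset V :=
  if h : ∃ v ∈ S, G.IsExactAlliance (S.erase v) 1 then S.erase h.choose else ∅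

lemma coeff3_le_coeff1 (hreg : G.IsRegularOfDegree 3) :
    G.allianceCoeff 3 ≤ G.allianceCoeff 1 := by
  rw [SimpleGraph.allianceCoeff, SimpleGraph.allianceCoeff]
  apply Set.ncard_le_ncard_of_injOn (pick G)
  · intro S hS
    have hex := erase_alliance G hreg hS
    rw [Set.mem_setOf_eq] at hS ⊢
    rw [pick, dif_pos hex]
    exact hex.choose_spec.2
  · intro S1 h1 S2 h2 heq
    rw [Set.mem_setOf_eq] at h1 h2
    have e1 := erase_alliance G hreg h1
    have e2 := erase_alliance G hreg h2
    rw [pick, dif_pos e1, pick, dif_pos e2] at heq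
    have hA1 := e1.choose_spec.2
    have hne : (S1.erase e1.choose).Nonempty := by
      obtain ⟨x⟩ := hA1.1.nonempty
      exact ⟨x, by exact_mod_cast x.2⟩
    obtain ⟨u, hu⟩ := hne
    have hu1 : u ∈ S1 := Finset.mem_of_mem_erase hu
    have hu2 : u ∈ S2 := Finset.mem_of_mem_erase (heq ▸ hu)
    have subset_of : ∀ (A B : Finset V), G.IsExactAlliance A 3 → G.IsExactAlliance B 3 →
        u ∈ A → u ∈ B → A ⊆ B := by
      intro A B hA hB huA huB w hw
      have hconnA := (conn_iff G A).mp hA.1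
      obtain ⟨p, -⟩ := hconnA.2 u huA w hw
      exact mem_of_walk G (alliance3_closed G hreg hB) p huB
    exact Finset.Subset.antisymm (subset_of S1 S2 h1 h2 hu1 hu2)
      (subset_of S2 S1 h2 h1 hu2 hu1)

lemma singleton_alliance (hreg : G.IsRegularOfDegree 3) (v : V) :
    G.IsExactAlliance {v} (-3) := by
  have hin : G.degIn {v} v = 0 := by
    simp [SimpleGraph.degIn, Finset.filter_singleton]
  have hout : G.degOut {v} v = 3 := by
    have := sum_three G hreg {v} v
    omega
  refine ⟨?_, ?_, v, Finset.mem_singleton_self v, by rw [hin, hout]; norm_num⟩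
  · haveI : Nonempty (({v} : Finset V) : Set V) := ⟨⟨v, by simp⟩⟩
    refine ⟨?_⟩
    rintro ⟨x, hx⟩ ⟨y, hy⟩
    simp only [Finset.coe_singleton, Set.mem_singleton_iff] at hx hy
    subst hx; subst hy
    rfl
  · intro u hu
    rw [Finset.mem_singleton] at hu
    subst hu
    rw [hin, hout]
    norm_num

lemma coeff_neg3 (hreg : G.IsRegularOfDegree 3) :
    G.allianceCoeff (-3) = Fintype.card V := by
  have hset : {S : Finset V | G.IsExactAlliance S (-3)} =
      Set.range (fun v : V => ({v} : Finset V)) := by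
    ext S
    simp only [Set.mem_setOf_eq, Set.mem_range]
    constructor
    · rintro ⟨hconn, hge, v, hv, heq⟩
      have hs := sum_three G hreg S v
      have hin : G.degIn S v = 0 := by omega
      refine ⟨v, ?_⟩
      symm
      apply Finset.eq_singleton_iff_unique_mem.mpr
      refine ⟨hv, ?_⟩
      intro u hu
      by_contra hne
      obtain ⟨-, h⟩ := (conn_iff G S).mp hconn
      obtain ⟨w, hw⟩ := h v hv u hu
      cases w with
      | nil => exact hne rfl
      | @cons _ c _ hadj p =>
        have hc : c ∈ S := by
          apply hw c
          rw [SimpleGraph.Walk.support_cons]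
          exact List.mem_cons_of_mem _ p.start_mem_support
        have : (0 : ℕ) < G.degIn S v :=
          Finset.card_pos.mpr ⟨c, Finset.mem_filter.mpr ⟨hc, hadj⟩⟩
        omega
    · rintro ⟨v, rfl⟩
      exact singleton_alliance G hreg v
  rw [SimpleGraph.allianceCoeff, hset, ← Set.image_univ,
    Set.ncard_image_of_injective _ Finset.singleton_injective, Set.ncard_univ,
    Nat.card_eq_fintype_card]

noncomputable def pairF : Sym2 V → Finset V :=
  Sym2.lift ⟨fun a b => {a, b}, fun a b => Finset.pair_comm a b⟩

lemma pair_alliance (hreg : G.IsRegularOfDegree 3) {a b : V} (hab : G.Adj a b) :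
    G.IsExactAlliance {a, b} (-1) := by
  have hne := hab.ne
  have hinA : G.degIn {a, b} a = 1 := by
    have hf : ({a, b} : Finset V).filter (fun u => G.Adj a u) = {b} := by
      ext x
      simp only [Finset.mem_filter, Finset.mem_insert, Finset.mem_singleton]
      constructor
      · rintro ⟨rfl | rfl, h⟩
        · exact absurd h (G.irrefl)
        · rfl
      · rintro rfl
        exact ⟨Or.inr rfl, hab⟩
    rw [SimpleGraph.degIn, hf, Finset.card_singleton]
  have hinB : G.degIn {a, b} b = 1 := by
    have hf : ({a, b} : Finset V).filter (fun u => G.Adj b u) = {a} := by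
      ext x
      simp only [Finset.mem_filter, Finset.mem_insert, Finset.mem_singleton]
      constructor
      · rintro ⟨rfl | rfl, h⟩
        · rfl
        · exact absurd h (G.irrefl)
      · rintro rfl
        exact ⟨Or.inl rfl, hab.symm⟩
    rw [SimpleGraph.degIn, hf, Finset.card_singleton]
  have houtA : G.degOut {a, b} a = 2 := by have := sum_three G hreg {a, b} a; omega
  have houtB : G.degOut {a, b} b = 2 := by have := sum_three G hreg {a, b} b; omega
  refine ⟨?_, ?_, a, Finset.mem_insert_self a _, by rw [hinA, houtA]; norm_num⟩
  · haveI : Nonempty (({a, b} : Finset V) : Set V) := ⟨⟨a, by simp⟩⟩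
    refine ⟨?_⟩
    rintro ⟨x, hx⟩ ⟨y, hy⟩
    simp only [Finset.coe_insert, Finset.coe_singleton, Set.mem_insert_iff,
      Set.mem_singleton_iff] at hx hy
    have hadj : ∀ (hx' : (a : V) ∈ (({a, b} : Finset V) : Set V))
        (hy' : (b : V) ∈ (({a, b} : Finset V) : Set V)),
        (G.induce (({a, b} : Finset V) : Set V)).Adj ⟨a, hx'⟩ ⟨b, hy'⟩ := by
      intro hx' hy'
      simpa using hab
    rcases hx with rfl | rfl <;> rcases hy with rfl | rfl
    · rfl
    · exact (hadj _ _).reachable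
    · exact ((hadj _ _).symm).reachable
    · rfl
  · intro u hu
    rcases Finset.mem_insert.mp hu with rfl | hu
    · rw [hinA, houtA]; norm_num
    · rw [Finset.mem_singleton] at hu
      subst hu
      rw [hinB, houtB]; norm_num

lemma card_le_coeff_neg1 (hreg : G.IsRegularOfDegree 3) :
    G.edgeFinset.card ≤ G.allianceCoeff (-1) := by
  rw [← Set.ncard_coe_finset, SimpleGraph.coe_edgeFinset, SimpleGraph.allianceCoeff]
  apply Set.ncard_le_ncard_of_injOn pairF
  · intro e he
    induction e using Sym2.ind with
    | _ a b =>
      rw [SimpleGraph.mem_edgeSet] at he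
      rw [Set.mem_setOf_eq]
      show G.IsExactAlliance (pairF s(a, b)) (-1)
      have : pairF (s(a, b) : Sym2 V) = ({a, b} : Finset V) := rfl
      rw [this]
      exact pair_alliance G hreg he
  · rintro e he e' he' h
    induction e using Sym2.ind with
    | _ a b =>
      induction e' using Sym2.ind with
      | _ c d =>
        rw [SimpleGraph.mem_edgeSet] at he he'
        have h' : ({a, b} : Finset V) = ({c, d} : Finset V) := h
        have hab := he.ne
        have h1 : a ∈ ({c, d} : Finset V) := h' ▸ (Finset.mem_insert_self a {b})
        have h2 : b ∈ ({c, d} : Finset V) := h' ▸ (by simp)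
        rw [Finset.mem_insert, Finset.mem_singleton] at h1 h2
        rcases h1 with rfl | rfl <;> rcases h2 with rfl | rfl
        · exact absurd rfl hab
        · rfl
        · exact Sym2.eq_swap
        · exact absurd rfl hab

lemma coeff_even (hreg : G.IsRegularOfDegree 3) (k : ℤ) (hk : k = -2 ∨ k = 0 ∨ k = 2) :
    G.allianceCoeff k = 0 := by
  have hset : {S : Finset V | G.IsExactAlliance S k} = ∅ := by
    ext S
    simp only [Set.mem_setOf_eq, Set.mem_empty_iff_false, iff_false]
    rintro ⟨-, -, v, hv, heq⟩
    have := sum_three G hreg S v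
    rcases hk with rfl | rfl | rfl <;> omega
  rw [SimpleGraph.allianceCoeff, hset, Set.ncard_empty]

end AllianceAux

/-- For a cubic graph `G` of order `n` and size `m`:
`A(G;x) = A_{-3} x^{n-3} + A_{-1} x^{n-1} + A_1 x^{n+1} + A_3 x^{n+3}`, with
`A_{-3}(G) = n < m ≤ A_{-1}(G)` and `A_1(G) ≥ A_3(G)`. -/
theorem alliancePoly_cubic
    {V : Type*} [Fintype V] [DecidableEq V] [Nonempty V]
    (G : SimpleGraph V) [DecidableRel G.Adj]
    (hreg : G.IsRegularOfDegree 3) :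
    G.alliancePoly =
      (G.allianceCoeff (-3) : ℝ) • (Polynomial.X : Polynomial ℝ) ^ (Fintype.card V - 3) +
      (G.allianceCoeff (-1) : ℝ) • (Polynomial.X : Polynomial ℝ) ^ (Fintype.card V - 1) +
      (G.allianceCoeff 1 : ℝ) • (Polynomial.X : Polynomial ℝ) ^ (Fintype.card V + 1) +
      (G.allianceCoeff 3 : ℝ) • (Polynomial.X : Polynomial ℝ) ^ (Fintype.card V + 3) ∧
    G.allianceCoeff (-3) = Fintype.card V ∧
    Fintype.card V < G.edgeFinset.card ∧
    G.edgeFinset.card ≤ G.allianceCoeff (-1) ∧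
    G.allianceCoeff 3 ≤ G.allianceCoeff 1 := by
  have hn4 : 4 ≤ Fintype.card V := by
    obtain ⟨v⟩ := ‹Nonempty V›
    have hnot : v ∉ G.neighborFinset v := by simp
    have h1 : (insert v (G.neighborFinset v)).card = 4 := by
      rw [Finset.card_insert_of_notMem hnot]
      have : (G.neighborFinset v).card = G.degree v := rfl
      rw [this, hreg v]
    calc 4 = (insert v (G.neighborFinset v)).card := h1.symm
      _ ≤ Fintype.card V := Finset.card_le_univ _
  have hlt : Fintype.card V < G.edgeFinset.card := by
    have hsum : ∑ v, G.degree v = 3 * Fintype.card V := by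
      rw [Finset.sum_congr rfl (fun v _ => hreg v), Finset.sum_const, Finset.card_univ,
        smul_eq_mul, mul_comm]
    have h2m := G.sum_degrees_eq_twice_card_edges
    rw [hsum] at h2m
    omega
  have hmax : G.maxDegree = 3 := by
    apply le_antisymm
    · exact G.maxDegree_le_of_forall_degree_le 3 (fun v => (hreg v).le)
    · obtain ⟨v⟩ := ‹Nonempty V›
      rw [← hreg v]
      exact G.degree_le_maxDegree v
  refine ⟨?_, AllianceAux.coeff_neg3 G hreg, hlt, AllianceAux.card_le_coeff_neg1 G hreg,
    AllianceAux.coeff3_le_coeff1 G hreg⟩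
  rw [SimpleGraph.alliancePoly, hmax]
  have hIcc : Finset.Icc (-((3 : ℕ) : ℤ)) ((3 : ℕ) : ℤ) =
      ({-3, -2, -1, 0, 1, 2, 3} : Finset ℤ) := by decide
  rw [hIcc]
  have hm2 := AllianceAux.coeff_even G hreg (-2) (Or.inl rfl)
  have h0 := AllianceAux.coeff_even G hreg 0 (Or.inr (Or.inl rfl))
  have h2 := AllianceAux.coeff_even G hreg 2 (Or.inr (Or.inr rfl))
  have ea : ((Fintype.card V : ℤ) + (-3)).toNat = Fintype.card V - 3 := by omega
  have eb : ((Fintype.card V : ℤ) + (-1)).toNat = Fintype.card V - 1 := by omega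
  have ec : ((Fintype.card V : ℤ) + 1).toNat = Fintype.card V + 1 := by omega
  have ed : ((Fintype.card V : ℤ) + 3).toNat = Fintype.card V + 3 := by omega
  rw [Finset.sum_insert (by decide), Finset.sum_insert (by decide),
    Finset.sum_insert (by decide), Finset.sum_insert (by decide),
    Finset.sum_insert (by decide), Finset.sum_insert (by decide), Finset.sum_singleton]
  rw [hm2, h0, h2, ea, eb, ec, ed]
  simp only [Nat.cast_zero, zero_smul, add_zero, zero_add]
  ring
end

section
/- Let G be a cubic graph (3-regular finite simple graph). Then the sequence of coefficients (A_{−3}(G), A_{−1}(G), A_1(G), A_3(G)) is unimodal, i.e., there is an index j ∈ {0,1,2,3} such that the sequence is nondecreasing up to position j and nonincreasing from position j on. -/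
open Polynomial Finset

namespace SimpleGraph

variable {V : Type*} [Fintype V] [DecidableEq V]

lemma degIn_add_degOut (G : SimpleGraph V) [DecidableRel G.Adj] (S : Finset V) (v : V) :
    G.degIn S v + G.degOut S v = G.degree v := by
  classical
  have h1 : S.filter (fun u => G.Adj v u) ∪ Sᶜ.filter (fun u => G.Adj v u)
      = Finset.univ.filter (fun u => G.Adj v u) := by
    rw [← Finset.filter_union, Finset.union_compl]
  have h2 : Disjoint (S.filter (fun u => G.Adj v u)) (Sᶜ.filter (fun u => G.Adj v u)) :=
    Finset.disjoint_filter_filter disjoint_compl_right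
  have h3 := Finset.card_union_of_disjoint h2
  rw [h1] at h3
  rw [degIn, degOut, ← h3]
  rw [degree, neighborFinset_eq_filter]


lemma reachable_induce_of_walk {W : Type*} {H : SimpleGraph W} {s : Set W} :
    ∀ {a b : W} (p : H.Walk a b), (∀ x ∈ p.support, x ∈ s) →
      ∀ (ha : a ∈ s) (hb : b ∈ s), (H.induce s).Reachable ⟨a, ha⟩ ⟨b, hb⟩ := by
  intro a b p
  induction p with
  | nil => intro _ ha hb; exact Reachable.refl _
  | @cons a c b h q ih =>
    intro hsup ha hb
    have hc : c ∈ s := hsup c (by simp [Walk.support_cons])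
    have hadj : (H.induce s).Adj ⟨a, ha⟩ ⟨c, hc⟩ := by
      simp only [comap_adj, Function.Embedding.coe_subtype]
      exact h
    exact hadj.reachable.trans
      (ih (fun x hx => hsup x (by simp [Walk.support_cons, hx])) hc hb)

lemma exists_noncut {W : Type*} [Fintype W] [DecidableEq W] {H : SimpleGraph W}
    (hc : H.Connected) (h2 : 2 ≤ Fintype.card W) :
    ∃ v : W, (H.induce ({v}ᶜ : Set W)).Connected := by
  classical
  obtain ⟨u⟩ := hc.nonempty
  obtain ⟨v, -, hv⟩ := Finset.exists_max_image Finset.univ (fun w => H.dist u w)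
    ⟨u, Finset.mem_univ u⟩
  haveI : Nontrivial W := Fintype.one_lt_card_iff_nontrivial.mp h2
  obtain ⟨w₀, hw₀⟩ := exists_ne u
  have hdpos : 0 < H.dist u v := by
    have h1 := hv w₀ (Finset.mem_univ _)
    have h2' : H.dist u w₀ ≠ 0 := fun h0 =>
      hw₀ ((hc u w₀).dist_eq_zero_iff.mp h0).symm
    omega
  have hvu : v ≠ u := by
    rintro rfl
    simp [SimpleGraph.dist_self] at hdpos
  have key : ∀ w : W, w ≠ v → ∃ p : H.Walk u w, v ∉ p.support := by
    intro w hw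
    obtain ⟨p, hp, hlen⟩ := (hc u w).exists_path_of_dist
    by_cases hvp : v ∈ p.support
    · exfalso
      have l1 : H.dist u v ≤ (p.takeUntil v hvp).length := SimpleGraph.dist_le _
      have l2 : H.dist v w ≤ (p.dropUntil v hvp).length := SimpleGraph.dist_le _
      have l3 : (p.takeUntil v hvp).length + (p.dropUntil v hvp).length = p.length := by
        have h4 := congrArg Walk.length (p.take_spec hvp)
        rwa [Walk.length_append] at h4
      have l4 : H.dist u w ≤ H.dist u v := hv w (Finset.mem_univ _)
      have l5 : H.dist v w = 0 := by omega
      exact hw ((hc v w).dist_eq_zero_iff.mp l5).symm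
    · exact ⟨p, hvp⟩
  refine ⟨v, ?_⟩
  rw [connected_iff_exists_forall_reachable]
  refine ⟨⟨u, Set.mem_compl_singleton_iff.mpr hvu.symm⟩, ?_⟩
  rintro ⟨w, hw⟩
  have hw' : w ≠ v := Set.mem_compl_singleton_iff.mp hw
  obtain ⟨p, hp⟩ := key w hw'
  have hsup : ∀ x ∈ p.support, x ∈ ({v}ᶜ : Set W) := fun x hx =>
    Set.mem_compl_singleton_iff.mpr (fun h => hp (h ▸ hx))
  exact reachable_induce_of_walk p hsup _ _

lemma exists_erase_connected (G : SimpleGraph V) [DecidableRel G.Adj] (S : Finset V)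
    (hc : (G.induce (S : Set V)).Connected) (h2 : 2 ≤ S.card) :
    ∃ v ∈ S, (G.induce ((S.erase v : Finset V) : Set V)).Connected := by
  classical
  have hcard : 2 ≤ Fintype.card (S : Set V) := by
    simpa using h2
  obtain ⟨⟨v, hv⟩, hconn⟩ := exists_noncut hc hcard
  have hvS : v ∈ S := by simpa using hv
  refine ⟨v, hvS, ?_⟩
  let e : ((S.erase v : Finset V) : Set V) ≃
      (({(⟨v, hv⟩ : (S : Set V))} : Set (S : Set V))ᶜ : Set (S : Set V)) :=
    { toFun := fun x => ⟨⟨x.1, by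
        have := x.2
        simp only [Finset.coe_erase, Set.mem_diff] at this
        exact this.1⟩, by
        have := x.2
        simp only [Finset.coe_erase, Set.mem_diff, Set.mem_singleton_iff] at this ⊢
        exact fun h => this.2 (by simpa using congrArg Subtype.val h)⟩
      invFun := fun y => ⟨y.1.1, by
        have h1 : (y.1 : V) ∈ S := by simpa using y.1.2
        have h2 : y.1 ≠ (⟨v, hv⟩ : (S : Set V)) := y.2
        simp only [Finset.coe_erase, Set.mem_diff, Set.mem_singleton_iff]
        exact ⟨by simpa using h1, fun h => h2 (Subtype.ext h)⟩⟩
      left_inv := fun x => rfl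
      right_inv := fun y => rfl }
  have iso : (G.induce ((S.erase v : Finset V) : Set V)) ≃g
      ((G.induce (S : Set V)).induce
        (({(⟨v, hv⟩ : (S : Set V))} : Set (S : Set V))ᶜ : Set (S : Set V))) :=
    ⟨e, Iff.rfl⟩
  exact iso.connected_iff.mpr hconn

lemma singleton_alliance (G : SimpleGraph V) [DecidableRel G.Adj]
    (hreg : G.IsRegularOfDegree 3) (v : V) :
    G.IsExactAlliance {v} (-3) := by
  have hin : G.degIn {v} v = 0 := by
    simp [degIn, Finset.filter_singleton]
  have hsum := G.degIn_add_degOut {v} v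
  rw [hreg v] at hsum
  refine ⟨?_, ?_, v, Finset.mem_singleton_self v, by omega⟩
  · rw [connected_iff_exists_forall_reachable]
    refine ⟨⟨v, by simp⟩, ?_⟩
    rintro ⟨w, hw⟩
    have : w = v := by simpa using hw
    cases this
    exact Reachable.refl _
  · intro w hw
    rw [Finset.mem_singleton] at hw
    subst hw
    omega

lemma eq_singleton_of_alliance_neg3 (G : SimpleGraph V) [DecidableRel G.Adj]
    (hreg : G.IsRegularOfDegree 3) (S : Finset V) (h : G.IsExactAlliance S (-3)) :
    ∃ v, S = {v} := by
  obtain ⟨hconn, hall, v, hvS, hdiff⟩ := h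
  have hsum := G.degIn_add_degOut S v
  rw [hreg v] at hsum
  have hin : G.degIn S v = 0 := by omega
  refine ⟨v, ?_⟩
  ext w
  simp only [Finset.mem_singleton]
  constructor
  · intro hw
    by_contra hne
    have hvS' : v ∈ (S : Set V) := Finset.mem_coe.mpr hvS
    have hw' : w ∈ (S : Set V) := Finset.mem_coe.mpr hw
    obtain ⟨p⟩ := hconn ⟨v, hvS'⟩ ⟨w, hw'⟩
    have hne' : (⟨v, hvS'⟩ : (S : Set V)) ≠ ⟨w, hw'⟩ :=
      fun hh => hne (congrArg Subtype.val hh).symm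
    have hnn : ¬ p.Nil := Walk.not_nil_of_ne hne'
    rw [Walk.not_nil_iff] at hnn
    obtain ⟨x, hadj, q, -⟩ := hnn
    have hadj' : G.Adj v (x : V) := hadj
    have hmem : (x : V) ∈ S.filter (fun u => G.Adj v u) :=
      Finset.mem_filter.mpr ⟨Finset.mem_coe.mp x.2, hadj'⟩
    rw [degIn, Finset.card_eq_zero] at hin
    rw [hin] at hmem
    exact absurd hmem (Finset.notMem_empty _)
  · rintro rfl
    exact hvS

lemma edge_alliance (G : SimpleGraph V) [DecidableRel G.Adj]
    (hreg : G.IsRegularOfDegree 3) {a b : V} (hab : G.Adj a b) :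
    G.IsExactAlliance {a, b} (-1) := by
  have hne : a ≠ b := hab.ne
  have hinA : G.degIn {a, b} a = 1 := by
    rw [degIn]
    have hfil : ({a, b} : Finset V).filter (fun u => G.Adj a u) = {b} := by
      ext x
      simp only [Finset.mem_filter, Finset.mem_insert, Finset.mem_singleton]
      constructor
      · rintro ⟨rfl | rfl, hadj⟩
        · exact absurd hadj (G.irrefl)
        · rfl
      · rintro rfl
        exact ⟨Or.inr rfl, hab⟩
    rw [hfil, Finset.card_singleton]
  have hinB : G.degIn {a, b} b = 1 := by
    rw [degIn]
    have hfil : ({a, b} : Finset V).filter (fun u => G.Adj b u) = {a} := by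
      ext x
      simp only [Finset.mem_filter, Finset.mem_insert, Finset.mem_singleton]
      constructor
      · rintro ⟨rfl | rfl, hadj⟩
        · rfl
        · exact absurd hadj (G.irrefl)
      · rintro rfl
        exact ⟨Or.inl rfl, hab.symm⟩
    rw [hfil, Finset.card_singleton]
  have hsumA := G.degIn_add_degOut {a, b} a
  have hsumB := G.degIn_add_degOut {a, b} b
  rw [hreg a] at hsumA
  rw [hreg b] at hsumB
  have haS : a ∈ (({a, b} : Finset V) : Set V) := by simp
  have hbS : b ∈ (({a, b} : Finset V) : Set V) := by simp
  refine ⟨?_, ?_, a, by simp, by omega⟩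
  · rw [connected_iff_exists_forall_reachable]
    refine ⟨⟨a, haS⟩, ?_⟩
    rintro ⟨x, hx⟩
    have hx' : x = a ∨ x = b := by simpa using hx
    have hadj' : (G.induce (({a, b} : Finset V) : Set V)).Adj ⟨a, haS⟩ ⟨b, hbS⟩ := by
      simp only [comap_adj, Function.Embedding.coe_subtype]
      exact hab
    rcases hx' with rfl | rfl
    · exact Reachable.refl _
    · exact hadj'.reachable
  · intro w hw
    rw [Finset.mem_insert, Finset.mem_singleton] at hw
    rcases hw with rfl | rfl
    · omega
    · omega

lemma alliance3_deg (G : SimpleGraph V) [DecidableRel G.Adj]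
    (hreg : G.IsRegularOfDegree 3) (S : Finset V) (h : G.IsExactAlliance S 3) :
    ∀ w ∈ S, G.degIn S w = 3 ∧ G.degOut S w = 0 := by
  intro w hw
  have h1 := h.2.1 w hw
  have hsum := G.degIn_add_degOut S w
  rw [hreg w] at hsum
  omega

lemma alliance3_card (G : SimpleGraph V) [DecidableRel G.Adj]
    (hreg : G.IsRegularOfDegree 3) (S : Finset V) (h : G.IsExactAlliance S 3) :
    2 ≤ S.card := by
  obtain ⟨v, hv, -⟩ := h.2.2
  have h3 : G.degIn S v = 3 := (alliance3_deg G hreg S h v hv).1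
  have := Finset.card_filter_le S (fun u => G.Adj v u)
  rw [degIn] at h3
  omega

noncomputable def eraseMap (G : SimpleGraph V) [DecidableRel G.Adj] (S : Finset V) : Finset V :=
  if h : ∃ v ∈ S, (G.induce ((S.erase v : Finset V) : Set V)).Connected
  then S.erase h.choose else ∅

lemma eraseMap_spec (G : SimpleGraph V) [DecidableRel G.Adj]
    (hreg : G.IsRegularOfDegree 3) (S : Finset V) (h : G.IsExactAlliance S 3) :
    ∃ v ∈ S, (G.induce ((S.erase v : Finset V) : Set V)).Connected ∧
      G.eraseMap S = S.erase v := by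
  have hex : ∃ v ∈ S, (G.induce ((S.erase v : Finset V) : Set V)).Connected :=
    G.exists_erase_connected S h.1 (alliance3_card G hreg S h)
  obtain ⟨hvS, hconn⟩ := hex.choose_spec
  exact ⟨hex.choose, hvS, hconn, by rw [eraseMap, dif_pos hex]⟩

lemma eraseMap_alliance (G : SimpleGraph V) [DecidableRel G.Adj]
    (hreg : G.IsRegularOfDegree 3) (S : Finset V) (h : G.IsExactAlliance S 3) :
    G.IsExactAlliance (G.eraseMap S) 1 := by
  obtain ⟨v, hvS, hconn, heq⟩ := eraseMap_spec G hreg S h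
  rw [heq]
  have hdeg := alliance3_deg G hreg S h
  refine ⟨hconn, ?_, ?_⟩
  · intro w hw
    have hwS := Finset.mem_of_mem_erase hw
    have h3 : G.degIn S w = 3 := (hdeg w hwS).1
    have hle : 2 ≤ G.degIn (S.erase v) w := by
      rw [degIn, Finset.filter_erase]
      have h1 := Finset.card_erase_le (s := S.filter (fun u => G.Adj w u)) (a := v)
      have h2 : (S.filter (fun u => G.Adj w u)).card - 1
          ≤ ((S.filter (fun u => G.Adj w u)).erase v).card := Finset.pred_card_le_card_erase
      rw [degIn] at h3
      omega
    have hsum := G.degIn_add_degOut (S.erase v) w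
    rw [hreg w] at hsum
    omega
  · have h3 : G.degIn S v = 3 := (hdeg v hvS).1
    have hne : (S.filter (fun u => G.Adj v u)).Nonempty := by
      rw [← Finset.card_pos]
      rw [degIn] at h3
      omega
    obtain ⟨u, hu⟩ := hne
    obtain ⟨huS, hadj⟩ := Finset.mem_filter.mp hu
    have hune : u ≠ v := fun hh => G.irrefl (hh ▸ hadj)
    refine ⟨u, Finset.mem_erase.mpr ⟨hune, huS⟩, ?_⟩
    have h3u : G.degIn S u = 3 := (hdeg u huS).1
    have hvmem : v ∈ S.filter (fun x => G.Adj u x) :=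
      Finset.mem_filter.mpr ⟨hvS, hadj.symm⟩
    have hin : G.degIn (S.erase v) u = 2 := by
      rw [degIn, Finset.filter_erase, Finset.card_erase_of_mem hvmem]
      rw [degIn] at h3u
      omega
    have hsum := G.degIn_add_degOut (S.erase v) u
    rw [hreg u] at hsum
    omega

lemma eraseMap_injOn (G : SimpleGraph V) [DecidableRel G.Adj]
    (hreg : G.IsRegularOfDegree 3) :
    Set.InjOn G.eraseMap {S : Finset V | G.IsExactAlliance S 3} := by
  intro S hS S' hS' heq0
  obtain ⟨v, hvS, -, heqS⟩ := eraseMap_spec G hreg S hS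
  obtain ⟨v', hv'S', -, heqS'⟩ := eraseMap_spec G hreg S' hS'
  rw [heqS, heqS'] at heq0
  by_cases hvv : v = v'
  · subst hvv
    rw [← Finset.insert_erase hvS, heq0, Finset.insert_erase hv'S']
  · exfalso
    have h3 : G.degIn S v = 3 := (alliance3_deg G hreg S hS v hvS).1
    have hne : (S.filter (fun u => G.Adj v u)).Nonempty := by
      rw [← Finset.card_pos]
      rw [degIn] at h3
      omega
    obtain ⟨u, hu⟩ := hne
    obtain ⟨huS, hadj⟩ := Finset.mem_filter.mp hu
    have hune : u ≠ v := fun hh => G.irrefl (hh ▸ hadj)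
    have huT : u ∈ S.erase v := Finset.mem_erase.mpr ⟨hune, huS⟩
    have huS' : u ∈ S' := Finset.mem_of_mem_erase (by rw [← heq0] at *; exact (heq0 ▸ huT))
    have hout : G.degOut S' u = 0 := (alliance3_deg G hreg S' hS' u huS').2
    have hvS' : v ∈ S' := by
      by_contra hvn
      have hmem : v ∈ S'ᶜ.filter (fun x => G.Adj u x) :=
        Finset.mem_filter.mpr ⟨Finset.mem_compl.mpr hvn, hadj.symm⟩
      rw [degOut, Finset.card_eq_zero] at hout
      rw [hout] at hmem
      exact absurd hmem (Finset.notMem_empty _)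
    have hfin : v ∈ S'.erase v' := Finset.mem_erase.mpr ⟨hvv, hvS'⟩
    rw [← heq0] at hfin
    exact absurd hfin (Finset.notMem_erase v S)

lemma card_le_edgeCard (G : SimpleGraph V) [DecidableRel G.Adj]
    (hreg : G.IsRegularOfDegree 3) :
    Fintype.card V ≤ G.edgeFinset.card := by
  have h := G.sum_degrees_eq_twice_card_edges
  have h2 : ∑ v, G.degree v = 3 * Fintype.card V := by
    rw [Finset.sum_congr rfl (fun v _ => hreg v), Finset.sum_const, Finset.card_univ,
      smul_eq_mul, mul_comm]
  omega

lemma edgeCard_le_allianceSet (G : SimpleGraph V) [DecidableRel G.Adj]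
    (hreg : G.IsRegularOfDegree 3) :
    G.edgeFinset.card ≤ {S : Finset V | G.IsExactAlliance S (-1)}.ncard := by
  classical
  rw [← Set.ncard_coe_finset]
  apply Set.ncard_le_ncard_of_injOn
    (fun e => Sym2.lift ⟨fun a b => ({a, b} : Finset V), fun a b => Finset.pair_comm a b⟩ e)
  · intro e he
    induction e with
    | _ a b =>
      have hab : G.Adj a b := by
        rw [Finset.mem_coe, mem_edgeFinset] at he
        exact he
      simpa using edge_alliance G hreg hab
  · intro e he e' he' heq
    induction e with
    | _ a b =>
      induction e' with
      | _ c d =>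
        rw [Finset.mem_coe, mem_edgeFinset, mem_edgeSet] at he he'
        simp only [Sym2.lift_mk] at heq
        have hab : a ≠ b := he.ne
        have hcd : c ≠ d := he'.ne
        have h1 : a = c ∨ a = d := by
          have : a ∈ ({c, d} : Finset V) := heq ▸ (Finset.mem_insert_self a {b})
          simpa using this
        have h2 : b = c ∨ b = d := by
          have : b ∈ ({c, d} : Finset V) := heq ▸ (by simp : b ∈ ({a, b} : Finset V))
          simpa using this
        rw [Sym2.eq_iff]
        rcases h1 with h1 | h1 <;> rcases h2 with h2 | h2
        · exact absurd (h1.trans h2.symm) hab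
        · exact Or.inl ⟨h1, h2⟩
        · exact Or.inr ⟨h1, h2⟩
        · exact absurd (h1.trans h2.symm) hab

lemma allianceSet_neg3_le (G : SimpleGraph V) [DecidableRel G.Adj]
    (hreg : G.IsRegularOfDegree 3) :
    {S : Finset V | G.IsExactAlliance S (-3)}.ncard ≤ Fintype.card V := by
  have hsub : {S : Finset V | G.IsExactAlliance S (-3)}
      ⊆ Set.range (fun v : V => ({v} : Finset V)) := by
    intro S hS
    obtain ⟨v, rfl⟩ := eq_singleton_of_alliance_neg3 G hreg S hS
    exact ⟨v, rfl⟩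
  calc {S : Finset V | G.IsExactAlliance S (-3)}.ncard
      ≤ (Set.range (fun v : V => ({v} : Finset V))).ncard :=
        Set.ncard_le_ncard hsub (Set.toFinite _)
    _ ≤ (Set.univ : Set V).ncard := by
        rw [← Set.image_univ]
        exact Set.ncard_image_le (Set.toFinite _)
    _ = Fintype.card V := by rw [Set.ncard_univ, Nat.card_eq_fintype_card]

lemma allianceSet_3_le_1 (G : SimpleGraph V) [DecidableRel G.Adj]
    (hreg : G.IsRegularOfDegree 3) :
    {S : Finset V | G.IsExactAlliance S 3}.ncard
      ≤ {S : Finset V | G.IsExactAlliance S 1}.ncard := by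
  apply Set.ncard_le_ncard_of_injOn G.eraseMap
  · intro S hS
    exact eraseMap_alliance G hreg S hS
  · exact eraseMap_injOn G hreg

end SimpleGraph

lemma unimodal4 {w x y z : ℕ} (h1 : w ≤ x) (h2 : z ≤ y) :
    ∃ j : Fin 4,
      (∀ a b : Fin 4, a ≤ b → b ≤ j → ![w, x, y, z] a ≤ ![w, x, y, z] b) ∧
      (∀ a b : Fin 4, j ≤ a → a ≤ b → ![w, x, y, z] b ≤ ![w, x, y, z] a) := by
  by_cases h3 : y ≤ x
  · refine ⟨1, ?_, ?_⟩ <;>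
      (intro a b hab hb; fin_cases a <;> fin_cases b <;>
        simp_all [Fin.le_def] <;> omega)
  · push_neg at h3
    refine ⟨2, ?_, ?_⟩ <;>
      (intro a b hab hb; fin_cases a <;> fin_cases b <;>
        simp_all [Fin.le_def] <;> omega)

/-- For a cubic graph `G`, the coefficient sequence
`(A_{-3}(G), A_{-1}(G), A_1(G), A_3(G))` is unimodal. -/
theorem alliance_coeffs_cubic_unimodal
    {V : Type*} [Fintype V] [DecidableEq V]
    (G : SimpleGraph V) [DecidableRel G.Adj]
    (hreg : G.IsRegularOfDegree 3) :
    ∃ j : Fin 4,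
      (∀ a b : Fin 4, a ≤ b → b ≤ j →
        ![G.allianceCoeff (-3), G.allianceCoeff (-1), G.allianceCoeff 1, G.allianceCoeff 3] a ≤
        ![G.allianceCoeff (-3), G.allianceCoeff (-1), G.allianceCoeff 1, G.allianceCoeff 3] b) ∧
      (∀ a b : Fin 4, j ≤ a → a ≤ b →
        ![G.allianceCoeff (-3), G.allianceCoeff (-1), G.allianceCoeff 1, G.allianceCoeff 3] b ≤
        ![G.allianceCoeff (-3), G.allianceCoeff (-1), G.allianceCoeff 1, G.allianceCoeff 3] a) := by
  classical
  have h01 : G.allianceCoeff (-3) ≤ G.allianceCoeff (-1) :=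
    le_trans (SimpleGraph.allianceSet_neg3_le G hreg)
      (le_trans (SimpleGraph.card_le_edgeCard G hreg)
        (SimpleGraph.edgeCard_le_allianceSet G hreg))
  have h31 : G.allianceCoeff 3 ≤ G.allianceCoeff 1 :=
    SimpleGraph.allianceSet_3_le_1 G hreg
  exact unimodal4 h01 h31
end

section
/- Let G be a connected finite simple graph with maximum degree Δ. Then G is regular (every vertex has degree Δ) if and only if A_Δ(G) = 1. -/
open Polynomial Finset

/-- A connected graph `G` with maximum degree `Δ` is `Δ`-regular iff
`A_Δ(G) = 1`. -/
theorem regular_iff_allianceCoeff_maxDegree_eq_one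
    {V : Type*} [Fintype V] [DecidableEq V]
    (G : SimpleGraph V) [DecidableRel G.Adj] (hconn : G.Connected) :
    G.IsRegularOfDegree G.maxDegree ↔ G.allianceCoeff (G.maxDegree : ℤ) = 1 := by
  classical
  have hNE : Nonempty V := hconn.nonempty
  -- degIn + degOut = degree
  have hsum : ∀ (S : Finset V) (v : V), G.degIn S v + G.degOut S v = G.degree v := by
    intro S v
    rw [SimpleGraph.degIn, SimpleGraph.degOut, ← Finset.card_union_of_disjoint
      (Finset.disjoint_filter_filter disjoint_compl_right),
      ← Finset.filter_union, Finset.union_compl, ← SimpleGraph.neighborFinset_eq_filter,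
      SimpleGraph.card_neighborFinset_eq_degree]
  -- any exact Δ-alliance forces degOut = 0 and degree = Δ on S
  have key : ∀ S : Finset V, G.IsExactAlliance S (G.maxDegree : ℤ) →
      (∀ v ∈ S, G.degOut S v = 0 ∧ G.degree v = G.maxDegree) ∧ S = Finset.univ := by
    intro S ⟨hScon, hlb, _⟩
    have hvS : ∀ v ∈ S, G.degOut S v = 0 ∧ G.degree v = G.maxDegree := by
      intro v hv
      have h1 := hlb v hv
      have h2 := hsum S v
      have h3 := G.degree_le_maxDegree v
      omega
    refine ⟨hvS, ?_⟩
    -- S is closed under adjacency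
    have hclosed : ∀ v ∈ S, ∀ u, G.Adj v u → u ∈ S := by
      intro v hv u hadj
      by_contra hu
      have : u ∈ Sᶜ.filter (fun u => G.Adj v u) := by
        simp [Finset.mem_filter, hu, hadj]
      have := Finset.card_pos.mpr ⟨u, this⟩
      have h0 := (hvS v hv).1
      rw [SimpleGraph.degOut] at h0
      omega
    -- S nonempty from connectedness
    obtain ⟨⟨v₀, hv₀⟩⟩ := hScon.nonempty
    have hv₀S : v₀ ∈ S := by simpa using hv₀
    ext u
    simp only [Finset.mem_univ, iff_true]
    obtain ⟨w⟩ := hconn v₀ u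
    clear hv₀
    induction w with
    | nil => exact hv₀S
    | cons h p ih => exact ih (hclosed _ hv₀S _ h)
  -- univ is an exact alliance when G is regular
  have hdegIn_univ : ∀ v : V, G.degIn Finset.univ v = G.degree v := by
    intro v
    rw [SimpleGraph.degIn, ← SimpleGraph.neighborFinset_eq_filter,
      SimpleGraph.card_neighborFinset_eq_degree]
  have hdegOut_univ : ∀ v : V, G.degOut Finset.univ v = 0 := by
    intro v; simp [SimpleGraph.degOut]
  constructor
  · intro hreg
    have hset : {S : Finset V | G.IsExactAlliance S (G.maxDegree : ℤ)} = {Finset.univ} := by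
      ext S
      simp only [Set.mem_setOf_eq, Set.mem_singleton_iff]
      constructor
      · intro h; exact (key S h).2
      · rintro rfl
        refine ⟨?_, ?_, ?_⟩
        · rw [Finset.coe_univ]
          exact G.induceUnivIso.connected_iff.mpr hconn
        · intro v _; rw [hdegIn_univ, hdegOut_univ, hreg v]; simp
        · obtain ⟨v⟩ := hNE
          exact ⟨v, Finset.mem_univ v, by rw [hdegIn_univ, hdegOut_univ, hreg v]; simp⟩
    rw [SimpleGraph.allianceCoeff, hset, Set.ncard_singleton]
  · intro hone
    have : {S : Finset V | G.IsExactAlliance S (G.maxDegree : ℤ)}.Nonempty := by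
      rw [Set.nonempty_iff_ne_empty]
      intro h
      rw [SimpleGraph.allianceCoeff, h, Set.ncard_empty] at hone
      exact absurd hone (by norm_num)
    obtain ⟨S, hS⟩ := this
    obtain ⟨hvS, rfl⟩ := key S hS
    intro v
    exact (hvS v (Finset.mem_univ v)).2
end

section
/- Let G₁ and G₂ be regular finite simple graphs (G₁ is Δ₁-regular of order n₁ and size m₁, G₂ is Δ₂-regular of order n₂ and size m₂). If A(G₁;x) = A(G₂;x) as polynomials, then n₁ = n₂, m₁ = m₂, Δ₁ = Δ₂, and G₁ and G₂ have the same number of connected components. -/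
open Polynomial Finset

set_option linter.unusedSectionVars false

section Aux
variable {V : Type*} [Fintype V] [DecidableEq V] (G : SimpleGraph V) [DecidableRel G.Adj]

lemma aux_closed_mem {S : Finset V} (hcl : ∀ v ∈ S, ∀ u, G.Adj v u → u ∈ S)
    {v u : V} (w : G.Walk v u) (hv : v ∈ S) : u ∈ S := by
  induction w with
  | nil => exact hv
  | cons h p ih => exact ih (hcl _ hv _ h)

lemma aux_reachable_induce {S : Finset V} (hcl : ∀ v ∈ S, ∀ u, G.Adj v u → u ∈ S)
    {a b : V} (w : G.Walk a b) (ha : a ∈ S) (hb : b ∈ S) :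
    (G.induce (S : Set V)).Reachable ⟨a, Finset.mem_coe.mpr ha⟩ ⟨b, Finset.mem_coe.mpr hb⟩ := by
  induction w with
  | nil => rfl
  | @cons u c d h p ih =>
    have hc : c ∈ S := hcl _ ha _ h
    exact (SimpleGraph.Adj.reachable (by simpa using h :
      (G.induce (S : Set V)).Adj ⟨u, Finset.mem_coe.mpr ha⟩ ⟨c, Finset.mem_coe.mpr hc⟩)).trans
      (ih hc hb)

lemma aux_alliance_neg {Δ : ℕ} (h : G.IsRegularOfDegree Δ) (S : Finset V) :
    G.IsExactAlliance S (-(Δ : ℤ)) ↔ ∃ v, S = {v} := by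
  constructor
  · rintro ⟨hconn, hmin, v, hv, hval⟩
    have hsum := aux_degIn_add_degOut G S v
    rw [h v] at hsum
    have hin : G.degIn S v = 0 := by omega
    refine ⟨v, Finset.eq_singleton_iff_unique_mem.mpr ⟨hv, fun u hu => ?_⟩⟩
    by_contra hne
    obtain ⟨w⟩ := hconn.preconnected ⟨v, Finset.mem_coe.mpr hv⟩ ⟨u, Finset.mem_coe.mpr hu⟩
    cases w with
    | nil => exact hne rfl
    | @cons _ c _ hadj p =>
      have : (c : V) ∈ S.filter (fun u => G.Adj v u) := by
        simp only [SimpleGraph.comap_adj] at hadj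
        exact Finset.mem_filter.mpr ⟨Finset.mem_coe.mp c.2, hadj⟩
      have := Finset.card_pos.mpr ⟨_, this⟩
      rw [show (S.filter (fun u => G.Adj v u)).card = G.degIn S v from rfl, hin] at this
      omega
  · rintro ⟨v, rfl⟩
    have hin : G.degIn {v} v = 0 := by
      simp [SimpleGraph.degIn, Finset.filter_singleton]
    have hout : G.degOut {v} v = Δ := by
      have := aux_degIn_add_degOut G {v} v
      rw [h v, hin] at this; omega
    refine ⟨?_, ?_, v, Finset.mem_singleton_self v, by rw [hin, hout]; push_cast; ring⟩
    · haveI : Nonempty (↑({v} : Finset V) : Set V) := ⟨⟨v, by simp⟩⟩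
      constructor
      intro a b
      have : a = b := Subtype.ext (by
        have ha := a.2; have hb := b.2
        simp only [Finset.coe_singleton, Set.mem_singleton_iff] at ha hb
        rw [ha, hb])
      exact this ▸ SimpleGraph.Reachable.refl _
    · intro u hu
      rw [Finset.mem_singleton] at hu
      subst hu
      rw [hin, hout]; push_cast; omega

lemma aux_alliance_pos {Δ : ℕ} (h : G.IsRegularOfDegree Δ) (S : Finset V) :
    G.IsExactAlliance S (Δ : ℤ) ↔
      ∃ C : G.ConnectedComponent,
        S = Finset.univ.filter (fun v => v ∈ C.supp) := by
  constructor
  · rintro ⟨hconn, hmin, v₀, hv₀, -⟩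
    have hout : ∀ v ∈ S, G.degOut S v = 0 := by
      intro v hv
      have hsum := aux_degIn_add_degOut G S v
      rw [h v] at hsum
      have := hmin v hv
      omega
    have hcl : ∀ v ∈ S, ∀ u, G.Adj v u → u ∈ S := by
      intro v hv u hadj
      by_contra hu
      have : u ∈ Sᶜ.filter (fun u => G.Adj v u) :=
        Finset.mem_filter.mpr ⟨Finset.mem_compl.mpr hu, hadj⟩
      have := Finset.card_pos.mpr ⟨_, this⟩
      rw [show (Sᶜ.filter (fun u => G.Adj v u)).card = G.degOut S v from rfl, hout v hv] at this
      omega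
    refine ⟨G.connectedComponentMk v₀, ?_⟩
    ext u
    simp only [Finset.mem_filter, Finset.mem_univ, true_and,
      SimpleGraph.ConnectedComponent.mem_supp_iff, SimpleGraph.ConnectedComponent.eq]
    constructor
    · intro hu
      obtain ⟨w⟩ := hconn.preconnected ⟨u, Finset.mem_coe.mpr hu⟩ ⟨v₀, Finset.mem_coe.mpr hv₀⟩
      exact ⟨(w.map (SimpleGraph.Embedding.induce (S : Set V)).toHom)⟩
    · rintro ⟨w⟩
      exact aux_closed_mem G hcl w.reverse hv₀
  · rintro ⟨C, rfl⟩
    set S := Finset.univ.filter (fun v => v ∈ C.supp) with hS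
    obtain ⟨v₀, hv₀C⟩ := C.exists_rep
    have hmemS : ∀ u, u ∈ S ↔ G.connectedComponentMk u = C := by
      intro u
      simp [hS, SimpleGraph.ConnectedComponent.mem_supp_iff]
    have hv₀ : v₀ ∈ S := (hmemS v₀).mpr hv₀C
    have hcl : ∀ v ∈ S, ∀ u, G.Adj v u → u ∈ S := by
      intro v hv u hadj
      rw [hmemS] at hv ⊢
      rw [← hv]
      exact SimpleGraph.ConnectedComponent.sound hadj.symm.reachable
    have hout : ∀ v ∈ S, G.degOut S v = 0 := by
      intro v hv
      rw [SimpleGraph.degOut, Finset.card_eq_zero, Finset.filter_eq_empty_iff]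
      intro u hu
      exact fun hadj => (Finset.mem_compl.mp hu) (hcl v hv u hadj)
    have hval : ∀ v ∈ S, (G.degIn S v : ℤ) - (G.degOut S v : ℤ) = (Δ : ℤ) := by
      intro v hv
      have hsum := aux_degIn_add_degOut G S v
      rw [h v] at hsum
      rw [hout v hv] at hsum ⊢
      omega
    refine ⟨?_, fun v hv => (hval v hv).ge, v₀, hv₀, hval v₀ hv₀⟩
    haveI : Nonempty (↑S : Set V) := ⟨⟨v₀, Finset.mem_coe.mpr hv₀⟩⟩
    constructor
    rintro ⟨a, ha⟩ ⟨b, hb⟩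
    have ha' : a ∈ S := Finset.mem_coe.mp ha
    have hb' : b ∈ S := Finset.mem_coe.mp hb
    have : G.Reachable a b := by
      rw [hmemS] at ha' hb'
      exact SimpleGraph.ConnectedComponent.exact (ha'.trans hb'.symm)
    obtain ⟨w⟩ := this
    exact aux_reachable_induce G hcl w (Finset.mem_coe.mp ha) (Finset.mem_coe.mp hb)

lemma aux_allianceCoeff_neg {Δ : ℕ} (h : G.IsRegularOfDegree Δ) :
    G.allianceCoeff (-(Δ : ℤ)) = Fintype.card V := by
  rw [SimpleGraph.allianceCoeff]
  have hset : {S : Finset V | G.IsExactAlliance S (-(Δ : ℤ))} =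
      Set.range (fun v : V => ({v} : Finset V)) := by
    ext S
    simp only [Set.mem_setOf_eq, aux_alliance_neg G h, Set.mem_range, eq_comm]
  rw [hset, ← Nat.card_coe_set_eq,
    Nat.card_range_of_injective Finset.singleton_injective, Nat.card_eq_fintype_card]

lemma aux_allianceCoeff_pos {Δ : ℕ} (h : G.IsRegularOfDegree Δ) :
    G.allianceCoeff (Δ : ℤ) = Nat.card G.ConnectedComponent := by
  rw [SimpleGraph.allianceCoeff]
  have hinj : Function.Injective
      (fun C : G.ConnectedComponent => Finset.univ.filter (fun v => v ∈ C.supp)) := by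
    intro C C' hCC'
    apply SimpleGraph.ConnectedComponent.supp_injective
    ext v
    have := Finset.ext_iff.mp hCC' v
    simpa using this
  have hset : {S : Finset V | G.IsExactAlliance S (Δ : ℤ)} =
      Set.range (fun C : G.ConnectedComponent => Finset.univ.filter (fun v => v ∈ C.supp)) := by
    ext S
    simp only [Set.mem_setOf_eq, aux_alliance_pos G h, Set.mem_range, eq_comm]
  rw [hset, ← Nat.card_coe_set_eq, Nat.card_range_of_injective hinj]

lemma aux_maxDegree [Nonempty V] {Δ : ℕ} (h : G.IsRegularOfDegree Δ) :
    G.maxDegree = Δ := by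
  apply le_antisymm
  · exact G.maxDegree_le_of_forall_degree_le Δ (fun v => (h v).le)
  · obtain ⟨v⟩ := ‹Nonempty V›
    rw [← h v]
    exact G.degree_le_maxDegree v

lemma aux_lt_card [Nonempty V] {Δ : ℕ} (h : G.IsRegularOfDegree Δ) :
    Δ < Fintype.card V := by
  obtain ⟨v⟩ := ‹Nonempty V›
  rw [← h v]
  exact G.degree_lt_card_verts v

lemma aux_coeff_poly [Nonempty V] {Δ : ℕ} (h : G.IsRegularOfDegree Δ) (k : ℤ)
    (hk : k ∈ Finset.Icc (-(Δ : ℤ)) (Δ : ℤ)) :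
    G.alliancePoly.coeff (((Fintype.card V : ℤ) + k).toNat) = G.allianceCoeff k := by
  have hΔ : Δ < Fintype.card V := aux_lt_card G h
  rw [SimpleGraph.alliancePoly, aux_maxDegree G h, Polynomial.finset_sum_coeff]
  rw [Finset.sum_eq_single_of_mem k hk]
  · rw [Polynomial.coeff_smul, Polynomial.coeff_X_pow, if_pos rfl, smul_eq_mul, mul_one]
  · intro j hj hjk
    rw [Polynomial.coeff_smul, Polynomial.coeff_X_pow, if_neg, smul_zero]
    simp only [Finset.mem_Icc] at hj hk
    omega

lemma aux_coeff_poly_zero [Nonempty V] {Δ : ℕ} (h : G.IsRegularOfDegree Δ) (N : ℕ)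
    (hN : Fintype.card V + Δ < N ∨ N < Fintype.card V - Δ) :
    G.alliancePoly.coeff N = 0 := by
  have hΔ : Δ < Fintype.card V := aux_lt_card G h
  rw [SimpleGraph.alliancePoly, aux_maxDegree G h, Polynomial.finset_sum_coeff]
  apply Finset.sum_eq_zero
  intro j hj
  rw [Polynomial.coeff_smul, Polynomial.coeff_X_pow, if_neg, smul_zero]
  simp only [Finset.mem_Icc] at hj
  omega

lemma aux_natDegree [Nonempty V] {Δ : ℕ} (h : G.IsRegularOfDegree Δ) :
    G.alliancePoly.natDegree = Fintype.card V + Δ := by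
  have hΔ : Δ < Fintype.card V := aux_lt_card G h
  have hpos : G.allianceCoeff (Δ : ℤ) ≠ 0 := by
    rw [aux_allianceCoeff_pos G h]
    haveI : Nonempty G.ConnectedComponent := ⟨G.connectedComponentMk (Classical.arbitrary V)⟩
    exact Nat.card_pos.ne'
  have hco : G.alliancePoly.coeff (Fintype.card V + Δ) ≠ 0 := by
    have := aux_coeff_poly G h (Δ : ℤ) (by simp)
    rw [show (((Fintype.card V : ℤ) + Δ).toNat) = Fintype.card V + Δ by omega] at this
    rw [this]
    exact_mod_cast hpos
  refine le_antisymm ?_ (Polynomial.le_natDegree_of_ne_zero hco)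
  rw [Polynomial.natDegree_le_iff_coeff_eq_zero]
  intro N hN
  exact aux_coeff_poly_zero G h N (Or.inl hN)

lemma aux_natTrailingDegree [Nonempty V] {Δ : ℕ} (h : G.IsRegularOfDegree Δ) :
    G.alliancePoly.natTrailingDegree = Fintype.card V - Δ := by
  have hΔ : Δ < Fintype.card V := aux_lt_card G h
  have hco : G.alliancePoly.coeff (Fintype.card V - Δ) ≠ 0 := by
    have := aux_coeff_poly G h (-(Δ : ℤ)) (by simp)
    rw [show (((Fintype.card V : ℤ) + -(Δ : ℤ)).toNat) = Fintype.card V - Δ by omega] at this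
    rw [this, aux_allianceCoeff_neg G h]
    have : (0 : ℕ) < Fintype.card V := Fintype.card_pos
    exact_mod_cast this.ne'
  refine le_antisymm (Polynomial.natTrailingDegree_le_of_ne_zero hco) ?_
  apply Polynomial.le_natTrailingDegree
  · intro h0
    exact hco (by rw [h0, Polynomial.coeff_zero])
  · intro m hm
    exact aux_coeff_poly_zero G h m (Or.inr hm)

end Aux

/-- Regular graphs with equal alliance polynomials have the same order, size,
degree and number of connected components. -/
theorem regular_alliancePoly_eq_imp
    {V₁ V₂ : Type*} [Fintype V₁] [DecidableEq V₁] [Nonempty V₁]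
    [Fintype V₂] [DecidableEq V₂] [Nonempty V₂]
    (G₁ : SimpleGraph V₁) [DecidableRel G₁.Adj]
    (G₂ : SimpleGraph V₂) [DecidableRel G₂.Adj]
    (Δ₁ Δ₂ : ℕ) (h₁ : G₁.IsRegularOfDegree Δ₁) (h₂ : G₂.IsRegularOfDegree Δ₂)
    (h : G₁.alliancePoly = G₂.alliancePoly) :
    Fintype.card V₁ = Fintype.card V₂ ∧
    G₁.edgeFinset.card = G₂.edgeFinset.card ∧
    Δ₁ = Δ₂ ∧
    Nat.card G₁.ConnectedComponent = Nat.card G₂.ConnectedComponent := by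
  have hΔ₁ : Δ₁ < Fintype.card V₁ := aux_lt_card G₁ h₁
  have hΔ₂ : Δ₂ < Fintype.card V₂ := aux_lt_card G₂ h₂
  have hdeg : Fintype.card V₁ + Δ₁ = Fintype.card V₂ + Δ₂ := by
    rw [← aux_natDegree G₁ h₁, ← aux_natDegree G₂ h₂, h]
  have htr : Fintype.card V₁ - Δ₁ = Fintype.card V₂ - Δ₂ := by
    rw [← aux_natTrailingDegree G₁ h₁, ← aux_natTrailingDegree G₂ h₂, h]
  have hn : Fintype.card V₁ = Fintype.card V₂ := by omega
  have hΔ : Δ₁ = Δ₂ := by omega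
  have hcomp : Nat.card G₁.ConnectedComponent = Nat.card G₂.ConnectedComponent := by
    have e₁ := aux_coeff_poly G₁ h₁ (Δ₁ : ℤ) (by simp)
    have e₂ := aux_coeff_poly G₂ h₂ (Δ₂ : ℤ) (by simp)
    rw [aux_allianceCoeff_pos G₁ h₁] at e₁
    rw [aux_allianceCoeff_pos G₂ h₂] at e₂
    rw [h] at e₁
    rw [show ((Fintype.card V₁ : ℤ) + (Δ₁ : ℤ)).toNat
        = ((Fintype.card V₂ : ℤ) + (Δ₂ : ℤ)).toNat by omega] at e₁
    rw [e₂] at e₁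
    exact_mod_cast e₁.symm
  refine ⟨hn, ?_, hΔ, hcomp⟩
  have he₁ := G₁.sum_degrees_eq_twice_card_edges
  have he₂ := G₂.sum_degrees_eq_twice_card_edges
  have he₁' : Fintype.card V₁ * Δ₁ = 2 * G₁.edgeFinset.card := by
    rw [← he₁, Finset.sum_congr rfl (fun v _ => h₁ v), Finset.sum_const, smul_eq_mul,
      Finset.card_univ]
  have he₂' : Fintype.card V₂ * Δ₂ = 2 * G₂.edgeFinset.card := by
    rw [← he₂, Finset.sum_congr rfl (fun v _ => h₂ v), Finset.sum_const, smul_eq_mul,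
      Finset.card_univ]
  rw [hn, hΔ] at he₁'
  omega
end

section
/- Let G be a Δ-regular finite simple graph of order n with n < 2Δ. Then A_{Δ−2}(G) = n. -/
open Polynomial Finset

section Aux
variable {V : Type*} [Fintype V] [DecidableEq V] {G : SimpleGraph V} [DecidableRel G.Adj] {Δ : ℕ}

lemma deg_add (hreg : G.IsRegularOfDegree Δ) (S : Finset V) (v : V) :
    G.degIn S v + G.degOut S v = Δ := by
  rw [SimpleGraph.degIn, SimpleGraph.degOut,
    ← Finset.card_union_of_disjoint (Finset.disjoint_filter_filter disjoint_compl_right),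
    ← Finset.filter_union, Finset.union_compl]
  have e : Finset.univ.filter (fun u => G.Adj v u) = G.neighborFinset v :=
    (SimpleGraph.neighborFinset_eq_filter G).symm
  rw [e]
  exact hreg v

lemma sum_swap_aux (G : SimpleGraph V) [DecidableRel G.Adj] (S : Finset V) :
    ∑ v ∈ S, G.degOut S v = ∑ w ∈ Sᶜ, G.degIn S w := by
  simp only [SimpleGraph.degOut, SimpleGraph.degIn, Finset.card_filter]
  rw [Finset.sum_comm]
  exact Finset.sum_congr rfl fun w _ => Finset.sum_congr rfl fun v _ => by
    simp [G.adj_comm]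

lemma forward_aux (hreg : G.IsRegularOfDegree Δ) (hn : Fintype.card V < 2 * Δ)
    {S : Finset V} (h : G.IsExactAlliance S ((Δ : ℤ) - 2)) :
    ∃ w, S = Finset.univ.erase w := by
  obtain ⟨hconn, hmin, v0, hv0, hv0eq⟩ := h
  have hdeg : ∀ v, G.degIn S v + G.degOut S v = Δ := deg_add hreg S
  have hout_le : ∀ v ∈ S, G.degOut S v ≤ 1 := fun v hv => by
    have h1 := hmin v hv; have h2 := hdeg v; omega
  have hsub : S.filter (fun u => G.Adj v0 u) ⊆ S.erase v0 := by
    intro u hu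
    simp only [Finset.mem_filter] at hu
    exact Finset.mem_erase.2 ⟨fun he => G.irrefl (he ▸ hu.2), hu.1⟩
  have hspos : 1 ≤ S.card := Finset.card_pos.2 ⟨v0, hv0⟩
  have hsΔ : Δ ≤ S.card := by
    have hle := Finset.card_le_card hsub
    rw [Finset.card_erase_of_mem hv0] at hle
    have h1 := hmin v0 hv0; have h2 := hdeg v0
    have h3 : G.degIn S v0 = (S.filter (fun u => G.Adj v0 u)).card := rfl
    omega
  have hout0 : G.degOut S v0 = 1 := by have := hdeg v0; omega
  have htpos : 1 ≤ Sᶜ.card := by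
    have hle : G.degOut S v0 ≤ Sᶜ.card := Finset.card_le_card (Finset.filter_subset _ _)
    omega
  have hcomp : ∀ w ∈ Sᶜ, Δ + 1 ≤ G.degIn S w + Sᶜ.card := by
    intro w hw
    have hsub2 : Sᶜ.filter (fun u => G.Adj w u) ⊆ Sᶜ.erase w := by
      intro u hu
      simp only [Finset.mem_filter] at hu
      exact Finset.mem_erase.2 ⟨fun he => G.irrefl (he ▸ hu.2), hu.1⟩
    have hle := Finset.card_le_card hsub2
    rw [Finset.card_erase_of_mem hw] at hle
    have h2 := hdeg w
    have h3 : G.degOut S w = (Sᶜ.filter (fun u => G.Adj w u)).card := rfl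
    omega
  have hsum1 : ∑ w ∈ Sᶜ, G.degIn S w ≤ S.card := by
    rw [← sum_swap_aux]
    calc ∑ v ∈ S, G.degOut S v ≤ ∑ _v ∈ S, 1 := Finset.sum_le_sum hout_le
      _ = S.card := by simp
  have hsum2 : Sᶜ.card * (Δ + 1) ≤ (∑ w ∈ Sᶜ, G.degIn S w) + Sᶜ.card * Sᶜ.card := by
    have := Finset.card_nsmul_le_sum Sᶜ (fun w => G.degIn S w + Sᶜ.card) (Δ + 1) hcomp
    simpa [Finset.sum_add_distrib, mul_comm, smul_eq_mul] using this
  have hn' : S.card + Sᶜ.card = Fintype.card V := S.card_add_card_compl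
  have ht1 : Sᶜ.card = 1 := by
    by_contra hne
    have ht2 : 2 ≤ Sᶜ.card := by omega
    have htΔ : Sᶜ.card < Δ := by omega
    have key : Sᶜ.card * (Δ + 1) ≤ S.card + Sᶜ.card * Sᶜ.card := by omega
    have key' : (Sᶜ.card : ℤ) * ((Δ : ℤ) + 1) ≤ (S.card : ℤ) + (Sᶜ.card : ℤ) * (Sᶜ.card : ℤ) := by
      exact_mod_cast key
    have h2' : (2 : ℤ) ≤ (Sᶜ.card : ℤ) := by exact_mod_cast ht2
    have h3' : (Sᶜ.card : ℤ) < (Δ : ℤ) := by exact_mod_cast htΔ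
    have h4' : (S.card : ℤ) + (Sᶜ.card : ℤ) < 2 * (Δ : ℤ) := by exact_mod_cast hn' ▸ hn
    nlinarith [mul_nonneg (by linarith : (0:ℤ) ≤ (Sᶜ.card : ℤ) - 2)
      (by linarith : (0:ℤ) ≤ (Δ : ℤ) - (Sᶜ.card : ℤ))]
  obtain ⟨w, hw⟩ := Finset.card_eq_one.mp ht1
  refine ⟨w, ?_⟩
  have : S = Sᶜᶜ := (compl_compl S).symm
  rw [this, hw]
  ext x
  simp [eq_comm]

lemma backward_aux (hreg : G.IsRegularOfDegree Δ) (hn : Fintype.card V < 2 * Δ) (w : V) :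
    G.IsExactAlliance (Finset.univ.erase w) ((Δ : ℤ) - 2) := by
  set S : Finset V := Finset.univ.erase w with hS
  have hΔn : Δ < Fintype.card V := hreg w ▸ G.degree_lt_card_verts w
  have hΔ1 : 1 ≤ Δ := by omega
  have hScompl : Sᶜ = {w} := by simp [hS, Finset.compl_erase]
  have hdeg : ∀ v, G.degIn S v + G.degOut S v = Δ := deg_add hreg S
  have hout_le : ∀ v, G.degOut S v ≤ 1 := fun v => by
    rw [SimpleGraph.degOut, hScompl]
    exact (Finset.card_le_card (Finset.filter_subset _ _)).trans (by simp)
  obtain ⟨u, hu⟩ : (G.neighborFinset w).Nonempty := by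
    rw [← Finset.card_pos]
    have : (G.neighborFinset w).card = Δ := hreg w
    omega
  have hadj : G.Adj w u := by rwa [SimpleGraph.mem_neighborFinset] at hu
  have huw : u ≠ w := fun h => G.irrefl (h ▸ hadj)
  have huS : u ∈ S := Finset.mem_erase.2 ⟨huw, Finset.mem_univ u⟩
  have houtu : G.degOut S u = 1 := by
    rw [SimpleGraph.degOut, hScompl]
    simp [Finset.filter_singleton, hadj.symm]
  have hcard : S.card = Fintype.card V - 1 := by
    rw [hS, Finset.card_erase_of_mem (Finset.mem_univ w), Finset.card_univ]
  have hIn : ∀ v, Δ ≤ G.degIn S v + 1 := fun v => by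
    have := hdeg v; have := hout_le v; omega
  refine ⟨?_, fun v _ => by have := hdeg v; have := hout_le v; omega,
    ⟨u, huS, by have := hdeg u; rw [houtu] at this ⊢; omega⟩⟩
  haveI : Nonempty ((S : Set V) : Type _) := ⟨⟨u, by simpa using huS⟩⟩
  constructor
  rintro ⟨a, ha⟩ ⟨b, hb⟩
  have ha' : a ∈ S := by simpa using ha
  have hb' : b ∈ S := by simpa using hb
  by_cases hab : a = b
  · subst hab
    rfl
  by_cases hadj2 : G.Adj a b
  · exact SimpleGraph.Adj.reachable
      (show (G.induce (S : Set V)).Adj ⟨a, ha⟩ ⟨b, hb⟩ from hadj2)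
  · have hcom : ∃ c ∈ S, G.Adj a c ∧ G.Adj c b := by
      by_contra hno
      push_neg at hno
      have hdisj : Disjoint (S.filter (fun u => G.Adj a u)) (S.filter (fun u => G.Adj b u)) := by
        rw [Finset.disjoint_left]
        intro c hc1 hc2
        simp only [Finset.mem_filter] at hc1 hc2
        exact hno c hc1.1 hc1.2 hc2.2.symm
      have hsub : (S.filter (fun u => G.Adj a u)) ∪ (S.filter (fun u => G.Adj b u))
          ⊆ (S.erase a).erase b := by
        intro c hc
        simp only [Finset.mem_union, Finset.mem_filter] at hc
        rcases hc with ⟨hc1, hc2⟩ | ⟨hc1, hc2⟩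
        · refine Finset.mem_erase.2 ⟨?_, Finset.mem_erase.2 ⟨?_, hc1⟩⟩
          · rintro rfl; exact hadj2 hc2
          · rintro rfl; exact G.irrefl hc2
        · refine Finset.mem_erase.2 ⟨?_, Finset.mem_erase.2 ⟨?_, hc1⟩⟩
          · rintro rfl; exact G.irrefl hc2
          · rintro rfl; exact hadj2 hc2.symm
      have hle := Finset.card_le_card hsub
      rw [Finset.card_union_of_disjoint hdisj,
        Finset.card_erase_of_mem (Finset.mem_erase.2 ⟨fun h => hab (h.symm), hb'⟩),
        Finset.card_erase_of_mem ha'] at hle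
      have h1 := hIn a; have h2 := hIn b
      have e1 : G.degIn S a = (S.filter (fun u => G.Adj a u)).card := rfl
      have e2 : G.degIn S b = (S.filter (fun u => G.Adj b u)).card := rfl
      omega
    obtain ⟨c, hcS, hac, hcb⟩ := hcom
    have hc' : c ∈ (S : Set V) := by simpa using hcS
    exact (SimpleGraph.Adj.reachable
        (show (G.induce (S : Set V)).Adj ⟨a, ha⟩ ⟨c, hc'⟩ from hac)).trans
      (SimpleGraph.Adj.reachable (show (G.induce (S : Set V)).Adj ⟨c, hc'⟩ ⟨b, hb⟩ from hcb))

end Aux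

/-- For a Δ-regular graph of order `n < 2Δ`, `A_{Δ-2}(G) = n`. -/
theorem allianceCoeff_maxDeg_sub_two_eq_card
    {V : Type*} [Fintype V] [DecidableEq V]
    (G : SimpleGraph V) [DecidableRel G.Adj] (Δ : ℕ)
    (hreg : G.IsRegularOfDegree Δ) (hn : Fintype.card V < 2 * Δ) :
    G.allianceCoeff ((Δ : ℤ) - 2) = Fintype.card V := by
  have hinj : Function.Injective (fun w : V => (Finset.univ.erase w : Finset V)) := by
    intro a b h
    by_contra hne
    have h' : (Finset.univ.erase a : Finset V) = Finset.univ.erase b := h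
    have ha : a ∈ Finset.univ.erase b := Finset.mem_erase.2 ⟨hne, Finset.mem_univ a⟩
    rw [← h'] at ha
    exact (Finset.mem_erase.1 ha).1 rfl
  have hset : {S : Finset V | G.IsExactAlliance S ((Δ : ℤ) - 2)}
      = ↑(Finset.univ.image (fun w : V => (Finset.univ.erase w : Finset V))) := by
    ext S
    simp only [Set.mem_setOf_eq, Finset.coe_image, Set.mem_image, Finset.mem_coe,
      Finset.mem_univ, true_and]
    constructor
    · intro h
      obtain ⟨w, rfl⟩ := forward_aux hreg hn h
      exact ⟨w, rfl⟩
    · rintro ⟨w, rfl⟩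
      exact backward_aux hreg hn w
  rw [SimpleGraph.allianceCoeff, hset, Set.ncard_coe_finset,
    Finset.card_image_of_injective _ hinj, Finset.card_univ]
end

section
/- Let G be a Δ-regular finite simple graph of order n with Δ ≥ 3 and 2Δ ≤ n ≤ 2Δ+1. If S₁ and S₂ are cliques of G of cardinality Δ, then either S₁ = S₂ or S₁ ∩ S₂ = ∅. In particular, G contains at most two distinct cliques of cardinality Δ. -/
open Polynomial Finset

/-- In a Δ-regular graph with `Δ ≥ 3` and `2Δ ≤ n ≤ 2Δ+1`, any two cliques of
cardinality `Δ` are equal or disjoint; in particular there are at most two such cliques. -/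
theorem cliques_of_card_maxDeg_disjoint
    {V : Type*} [Fintype V] [DecidableEq V]
    (G : SimpleGraph V) [DecidableRel G.Adj] (Δ : ℕ)
    (hreg : G.IsRegularOfDegree Δ) (hΔ : 3 ≤ Δ)
    (h1 : 2 * Δ ≤ Fintype.card V) (h2 : Fintype.card V ≤ 2 * Δ + 1) :
    (∀ S₁ S₂ : Finset V, G.IsClique (S₁ : Set V) → S₁.card = Δ →
      G.IsClique (S₂ : Set V) → S₂.card = Δ → S₁ = S₂ ∨ Disjoint S₁ S₂) ∧
    Set.ncard {S : Finset V | G.IsClique (S : Set V) ∧ S.card = Δ} ≤ 2 := by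
  have herase : ∀ (S : Finset V), G.IsClique (S : Set V) → ∀ v ∈ S,
      S.erase v ⊆ G.neighborFinset v := by
    intro S hS v hv w hw
    rw [Finset.mem_erase] at hw
    exact (G.mem_neighborFinset v w).mpr ((hS hw.2 hv hw.1).symm)
  have key : ∀ S₁ S₂ : Finset V, G.IsClique (S₁ : Set V) → S₁.card = Δ →
      G.IsClique (S₂ : Set V) → S₂.card = Δ → S₁ = S₂ ∨ Disjoint S₁ S₂ := by
    intro S₁ S₂ h₁ hc₁ h₂ hc₂
    by_contra h
    push_neg at h
    obtain ⟨hne, hndisj⟩ := h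
    obtain ⟨v, hv₁, hv₂⟩ := Finset.not_disjoint_iff.mp hndisj
    set U := S₁ ∪ S₂ with hU
    have hsub : ∀ t, t ∈ S₁ → t ∈ S₂ → U.erase t ⊆ G.neighborFinset t := by
      intro t ht₁ ht₂ w hw
      rw [Finset.mem_erase, Finset.mem_union] at hw
      rcases hw.2 with hw1 | hw2
      · exact herase S₁ h₁ t ht₁ (Finset.mem_erase.mpr ⟨hw.1, hw1⟩)
      · exact herase S₂ h₂ t ht₂ (Finset.mem_erase.mpr ⟨hw.1, hw2⟩)
    have hUcard_le : U.card ≤ Δ + 1 := by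
      have h := Finset.card_le_card (hsub v hv₁ hv₂)
      rw [Finset.card_erase_of_mem (Finset.mem_union_left _ hv₁),
        SimpleGraph.card_neighborFinset_eq_degree, hreg v] at h
      rw [← hU] at h
      have : 1 ≤ U.card := Finset.card_pos.mpr ⟨v, Finset.mem_union_left _ hv₁⟩
      omega
    have hsum : U.card + (S₁ ∩ S₂).card = Δ + Δ := by
      rw [hU, Finset.card_union_add_card_inter, hc₁, hc₂]
    have hIlt : (S₁ ∩ S₂).card < Δ := by
      by_contra hh
      push_neg at hh
      have heq : S₁ ∩ S₂ = S₁ :=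
        Finset.eq_of_subset_of_card_le Finset.inter_subset_left (by omega)
      have hsub12 : S₁ ⊆ S₂ := by rw [← heq]; exact Finset.inter_subset_right
      exact hne (Finset.eq_of_subset_of_card_le hsub12 (by omega))
    have hUcard : U.card = Δ + 1 := by omega
    have hda : (S₁ \ S₂).card = 1 := by
      have := Finset.card_sdiff_add_card_inter S₁ S₂
      omega
    have hdb : (S₂ \ S₁).card = 1 := by
      have := Finset.card_sdiff_add_card_inter S₂ S₁
      rw [Finset.inter_comm] at this
      omega
    obtain ⟨a, ha⟩ := Finset.card_eq_one.mp hda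
    obtain ⟨b, hb⟩ := Finset.card_eq_one.mp hdb
    have haS₁ : a ∈ S₁ := (Finset.mem_sdiff.mp (ha ▸ Finset.mem_singleton_self a)).1
    have hbS₂ : b ∈ S₂ := (Finset.mem_sdiff.mp (hb ▸ Finset.mem_singleton_self b)).1
    have hNt : ∀ t, t ∈ S₁ → t ∈ S₂ → G.neighborFinset t = U.erase t := by
      intro t ht₁ ht₂
      refine (Finset.eq_of_subset_of_card_le (hsub t ht₁ ht₂) ?_).symm
      rw [Finset.card_erase_of_mem (Finset.mem_union_left _ ht₁),
        SimpleGraph.card_neighborFinset_eq_degree, hreg t]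
      rw [show #(S₁ ∪ S₂) = #U from rfl, hUcard]
      omega
    set O := Uᶜ with hO
    have hOcard : O.card = Fintype.card V - (Δ + 1) := by
      rw [hO, Finset.card_compl, hUcard]
    have hO2 : 2 ≤ O.card := by omega
    have hOΔ : O.card ≤ Δ := by omega
    have hNout : ∀ u ∈ O, G.neighborFinset u ⊆ O.erase u ∪ {a, b} := by
      intro u hu w hw
      have hadj : G.Adj u w := (G.mem_neighborFinset u w).mp hw
      by_cases hwU : w ∈ U
      · by_cases hw12 : w ∈ S₁ ∧ w ∈ S₂
        · exfalso
          have hmem : u ∈ G.neighborFinset w := (G.mem_neighborFinset w u).mpr hadj.symm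
          rw [hNt w hw12.1 hw12.2] at hmem
          exact (Finset.mem_compl.mp hu) (Finset.mem_of_mem_erase hmem)
        · have hab : w = a ∨ w = b := by
            rw [hU, Finset.mem_union] at hwU
            rcases hwU with h' | h'
            · left
              have : w ∈ S₁ \ S₂ := Finset.mem_sdiff.mpr ⟨h', fun hh => hw12 ⟨h', hh⟩⟩
              rw [ha] at this; exact Finset.mem_singleton.mp this
            · right
              have : w ∈ S₂ \ S₁ := Finset.mem_sdiff.mpr ⟨h', fun hh => hw12 ⟨hh, h'⟩⟩
              rw [hb] at this; exact Finset.mem_singleton.mp this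
          apply Finset.mem_union_right
          rcases hab with rfl | rfl
          · exact Finset.mem_insert_self _ _
          · exact Finset.mem_insert_of_mem (Finset.mem_singleton_self _)
      · exact Finset.mem_union_left _
          (Finset.mem_erase.mpr ⟨hadj.ne.symm, Finset.mem_compl.mpr hwU⟩)
    have hone : ∀ (S : Finset V), G.IsClique (S : Set V) → S.card = Δ → S ⊆ U → ∀ c ∈ S,
        (O.filter (fun u => G.Adj u c)).card ≤ 1 := by
      intro S hS hcS hSU c hc
      have hsub2 : O.filter (fun u => G.Adj u c) ⊆ G.neighborFinset c \ S.erase c := by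
        intro u hu
        rw [Finset.mem_filter] at hu
        refine Finset.mem_sdiff.mpr ⟨(G.mem_neighborFinset c u).mpr hu.2.symm, fun hh => ?_⟩
        exact (Finset.mem_compl.mp hu.1) (hSU (Finset.mem_of_mem_erase hh))
      calc (O.filter (fun u => G.Adj u c)).card ≤ (G.neighborFinset c \ S.erase c).card :=
            Finset.card_le_card hsub2
        _ = Δ - (Δ - 1) := by
            rw [Finset.card_sdiff_of_subset (herase S hS c hc),
              SimpleGraph.card_neighborFinset_eq_degree, hreg c,
              Finset.card_erase_of_mem hc, hcS]
        _ ≤ 1 := by omega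
    -- the main count
    have hptwise : ∀ u ∈ O, (G.neighborFinset u).card + 1
        ≤ O.card + (({a, b} : Finset V) ∩ G.neighborFinset u).card := by
      intro u hu
      have hsub3 : G.neighborFinset u ⊆ O.erase u ∪ (({a, b} : Finset V) ∩ G.neighborFinset u) := by
        intro w hw
        rcases Finset.mem_union.mp (hNout u hu hw) with h' | h'
        · exact Finset.mem_union_left _ h'
        · exact Finset.mem_union_right _ (Finset.mem_inter.mpr ⟨h', hw⟩)
      have h2' := Finset.card_le_card hsub3
      have h3' := Finset.card_union_le (O.erase u) (({a, b} : Finset V) ∩ G.neighborFinset u)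
      have h4' : (O.erase u).card = O.card - 1 := Finset.card_erase_of_mem hu
      have h5' : 1 ≤ O.card := Finset.card_pos.mpr ⟨u, hu⟩
      omega
    have hT : ∑ u ∈ O, (({a, b} : Finset V) ∩ G.neighborFinset u).card ≤ 2 := by
      have hrw : ∀ u ∈ O, (({a, b} : Finset V) ∩ G.neighborFinset u).card
          = ∑ w ∈ ({a, b} : Finset V), if G.Adj u w then 1 else 0 := by
        intro u _
        rw [← Finset.filter_mem_eq_inter, Finset.card_filter]
        simp only [SimpleGraph.mem_neighborFinset]
      calc ∑ u ∈ O, (({a, b} : Finset V) ∩ G.neighborFinset u).card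
          = ∑ u ∈ O, ∑ w ∈ ({a, b} : Finset V), if G.Adj u w then 1 else 0 :=
            Finset.sum_congr rfl hrw
        _ = ∑ w ∈ ({a, b} : Finset V), ∑ u ∈ O, if G.Adj u w then 1 else 0 :=
            Finset.sum_comm
        _ = ∑ w ∈ ({a, b} : Finset V), (O.filter (fun u => G.Adj u w)).card :=
            Finset.sum_congr rfl fun w _ => (Finset.card_filter _ _).symm
        _ ≤ ∑ w ∈ ({a, b} : Finset V), 1 := by
            refine Finset.sum_le_sum fun w hw => ?_
            rcases Finset.mem_insert.mp hw with rfl | hw'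
            · exact hone S₁ h₁ hc₁ Finset.subset_union_left w haS₁
            · rw [Finset.mem_singleton] at hw'
              subst hw'
              exact hone S₂ h₂ hc₂ Finset.subset_union_right w hbS₂
        _ ≤ 2 := by
            rw [Finset.sum_const, smul_eq_mul, mul_one]
            calc ({a, b} : Finset V).card ≤ ({b} : Finset V).card + 1 :=
                  Finset.card_insert_le _ _
              _ = 2 := by simp
    have hbig := Finset.sum_le_sum hptwise
    rw [Finset.sum_add_distrib, Finset.sum_add_distrib, Finset.sum_const, Finset.sum_const,
      smul_eq_mul, smul_eq_mul, mul_one] at hbig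
    have hdeg : ∑ u ∈ O, (G.neighborFinset u).card = O.card * Δ := by
      rw [Finset.sum_congr rfl
        (fun u _ => by rw [SimpleGraph.card_neighborFinset_eq_degree, hreg u])]
      rw [Finset.sum_const, smul_eq_mul]
    rw [hdeg] at hbig
    -- hbig : O.card * Δ + O.card ≤ O.card * O.card + ∑ ...
    have hcount : O.card * Δ + O.card ≤ O.card * O.card + 2 := by omega
    have hsq : O.card * O.card ≤ O.card * Δ := Nat.mul_le_mul_left _ hOΔ
    have hm2 : O.card = 2 := by omega
    rw [hm2] at hcount
    omega
  refine ⟨key, ?_⟩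
  by_contra hcard
  push_neg at hcard
  obtain ⟨A, hA, B, hB, C, hC, hAB, hAC, hBC⟩ :=
    (Set.two_lt_ncard (Set.toFinite _)).mp hcard
  simp only [Set.mem_setOf_eq] at hA hB hC
  have dAB : Disjoint A B := (key A B hA.1 hA.2 hB.1 hB.2).resolve_left hAB
  have dAC : Disjoint A C := (key A C hA.1 hA.2 hC.1 hC.2).resolve_left hAC
  have dBC : Disjoint B C := (key B C hB.1 hB.2 hC.1 hC.2).resolve_left hBC
  have hcards : (A ∪ B ∪ C).card = 3 * Δ := by
    rw [Finset.card_union_of_disjoint (Finset.disjoint_union_left.mpr ⟨dAC, dBC⟩),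
      Finset.card_union_of_disjoint dAB, hA.2, hB.2, hC.2]
    ring
  have := Finset.card_le_univ (A ∪ B ∪ C)
  rw [hcards] at this
  omega
end
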